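/- arXiv:2104.06694 — 7 statements merged into one kernel-verified Lean document; each statement's English description precedes it below -/
import Mathlib

section
/- Let G be a finite nilpotent group. Then the power graph P(G) is a line graph (i.e., there exists a graph Γ such that P(G) is isomorphic to the line graph of Γ) if and only if G is a cyclic group of prime power order. -/
/-- The power graph of a group `G`: distinct `x, y` are adjacent iff one is a positive
integer power of the other. -/
def powerGraph (G : Type) [Group G] : SimpleGraph G where
  Adj x y := x ≠ y ∧ ((∃ n : ℕ, 0 < n ∧ y ^ n = x) ∨ (∃ n : ℕ, 0 < n ∧ x ^ n = y))
  symm := by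
    constructor
    rintro x y ⟨hxy, h⟩
    exact ⟨hxy.symm, h.symm⟩
  loopless := by
    constructor
    rintro x ⟨h, -⟩
    exact h rfl

/-- A vertex is dominating if it is adjacent to every other vertex. -/
def SimpleGraph.IsDominatingVertex {V : Type} (H : SimpleGraph V) (v : V) : Prop :=
  ∀ u, u ≠ v → H.Adj v u

/-- The proper power graph: the induced subgraph of the power graph on the
set of non-dominating vertices. -/
def properPowerGraph (G : Type) [Group G] :=
  (powerGraph G).induce {x : G | ¬ (powerGraph G).IsDominatingVertex x}

/-- A graph is a line graph if it is isomorphic to the line graph of some graph. -/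
def IsLineGraph {V : Type} (H : SimpleGraph V) : Prop :=
  ∃ (W : Type) (Γ : SimpleGraph W), Nonempty (H ≃g Γ.lineGraph)


open Subgroup

private lemma sym2_three_mem {V : Type} {e : Sym2 V} {a b c : V}
    (ha : a ∈ e) (hb : b ∈ e) (hc : c ∈ e) : a = b ∨ a = c ∨ b = c := by
  induction e using Sym2.ind with
  | _ x y =>
    rw [Sym2.mem_iff] at ha hb hc
    rcases ha with rfl|rfl <;> rcases hb with rfl|rfl <;> rcases hc with rfl|rfl <;> tauto

private lemma sym2_star {V : Type} {X Y Z E : Sym2 V}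
    (hXY : X ≠ Y) (hXZ : X ≠ Z) (hYZ : Y ≠ Z)
    (hEX : E ≠ X) (hEY : E ≠ Y) (hEZ : E ≠ Z)
    (iXY : ∃ v, v ∈ X ∧ v ∈ Y) (iXZ : ∃ v, v ∈ X ∧ v ∈ Z) (iYZ : ∃ v, v ∈ Y ∧ v ∈ Z)
    (iEX : ∃ v, v ∈ E ∧ v ∈ X) (iEY : ∃ v, v ∈ E ∧ v ∈ Y) (iEZ : ∃ v, v ∈ E ∧ v ∈ Z) :
    ∃ v, v ∈ X ∧ v ∈ Y ∧ v ∈ Z ∧ v ∈ E := by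
  obtain ⟨v1, hv1X, hv1Y⟩ := iXY
  obtain ⟨v2, hv2X, hv2Z⟩ := iXZ
  obtain ⟨v3, hv3Y, hv3Z⟩ := iYZ
  obtain ⟨e1, he1E, he1X⟩ := iEX
  obtain ⟨e2, he2E, he2Y⟩ := iEY
  obtain ⟨e3, he3E, he3Z⟩ := iEZ
  have key : ∀ i j : V, i ≠ j → i ∈ E → j ∈ E → E = s(i, j) :=
    fun i j h hi hj => (Sym2.mem_and_mem_iff h).mp ⟨hi, hj⟩
  by_cases hstar : ∃ v, v ∈ X ∧ v ∈ Y ∧ v ∈ Z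
  · obtain ⟨v, hvX, hvY, hvZ⟩ := hstar
    by_cases h1 : e1 = v
    · exact ⟨v, hvX, hvY, hvZ, h1 ▸ he1E⟩
    by_cases h2 : e2 = v
    · exact ⟨v, hvX, hvY, hvZ, h2 ▸ he2E⟩
    by_cases h3 : e3 = v
    · exact ⟨v, hvX, hvY, hvZ, h3 ▸ he3E⟩
    exfalso
    have hX : X = s(v, e1) := (Sym2.mem_and_mem_iff (Ne.symm h1)).mp ⟨hvX, he1X⟩
    have hY : Y = s(v, e2) := (Sym2.mem_and_mem_iff (Ne.symm h2)).mp ⟨hvY, he2Y⟩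
    have hZ : Z = s(v, e3) := (Sym2.mem_and_mem_iff (Ne.symm h3)).mp ⟨hvZ, he3Z⟩
    have h12 : e1 ≠ e2 := fun h => hXY (by rw [hX, hY, h])
    have h13 : e1 ≠ e3 := fun h => hXZ (by rw [hX, hZ, h])
    have h23 : e2 ≠ e3 := fun h => hYZ (by rw [hY, hZ, h])
    have hE : E = s(e1, e2) := key _ _ h12 he1E he2E
    rw [hE, Sym2.mem_iff] at he3E
    tauto
  · push_neg at hstar
    have h1Z : v1 ∉ Z := fun h => hstar v1 hv1X hv1Y h
    have h2Y : v2 ∉ Y := fun h => hstar v2 hv2X h hv2Z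
    have h3X : v3 ∉ X := fun h => hstar v3 h hv3Y hv3Z
    have h12 : v1 ≠ v2 := fun h => h1Z (h ▸ hv2Z)
    have h13 : v1 ≠ v3 := fun h => h1Z (h ▸ hv3Z)
    have h23 : v2 ≠ v3 := fun h => h2Y (h ▸ hv3Y)
    have hX : X = s(v1, v2) := (Sym2.mem_and_mem_iff h12).mp ⟨hv1X, hv2X⟩
    have hY : Y = s(v1, v3) := (Sym2.mem_and_mem_iff h13).mp ⟨hv1Y, hv3Y⟩
    have hZ : Z = s(v2, v3) := (Sym2.mem_and_mem_iff h23).mp ⟨hv2Z, hv3Z⟩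
    exfalso
    rw [hX, Sym2.mem_iff] at he1X
    rw [hY, Sym2.mem_iff] at he2Y
    rw [hZ, Sym2.mem_iff] at he3Z
    rcases he1X with rfl | rfl <;> rcases he2Y with rfl | rfl
    · rcases he3Z with rfl | rfl
      · exact hEX ((key _ _ h12 he1E he3E).trans hX.symm)
      · exact hEY ((key _ _ h13 he1E he3E).trans hY.symm)
    · exact hEY ((key _ _ h13 he1E he2E).trans hY.symm)
    · exact hEX ((key _ _ h12 he2E he1E).trans hX.symm)
    · exact hEZ ((key _ _ h23 he1E he2E).trans hZ.symm)



open Subgroup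

private lemma no_claw' {W : Type} {Γ : SimpleGraph W} {x a b c : Γ.edgeSet}
    (hxa : Γ.lineGraph.Adj x a) (hxb : Γ.lineGraph.Adj x b) (hxc : Γ.lineGraph.Adj x c)
    (hab : ¬ Γ.lineGraph.Adj a b) (hac : ¬ Γ.lineGraph.Adj a c) (hbc : ¬ Γ.lineGraph.Adj b c)
    (hab' : a ≠ b) (hac' : a ≠ c) (hbc' : b ≠ c) : False := by
  rw [SimpleGraph.lineGraph_adj_iff_exists] at hxa hxb hxc
  obtain ⟨-, va, hvax, hvaa⟩ := hxa
  obtain ⟨-, vb, hvbx, hvbb⟩ := hxb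
  obtain ⟨-, vc, hvcx, hvcc⟩ := hxc
  have h3 : va = vb ∨ va = vc ∨ vb = vc := sym2_three_mem hvax hvbx hvcx
  rcases h3 with h | h | h
  · exact hab (SimpleGraph.lineGraph_adj_iff_exists.mpr ⟨hab', va, hvaa, by rw [h]; exact hvbb⟩)
  · exact hac (SimpleGraph.lineGraph_adj_iff_exists.mpr ⟨hac', va, hvaa, by rw [h]; exact hvcc⟩)
  · exact hbc (SimpleGraph.lineGraph_adj_iff_exists.mpr ⟨hbc', vb, hvbb, by rw [h]; exact hvcc⟩)

private lemma no_K5e' {W : Type} {Γ : SimpleGraph W} {x y z w w' : Γ.edgeSet}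
    (hxy : Γ.lineGraph.Adj x y) (hxz : Γ.lineGraph.Adj x z) (hyz : Γ.lineGraph.Adj y z)
    (hwx : Γ.lineGraph.Adj w x) (hwy : Γ.lineGraph.Adj w y) (hwz : Γ.lineGraph.Adj w z)
    (hw'x : Γ.lineGraph.Adj w' x) (hw'y : Γ.lineGraph.Adj w' y) (hw'z : Γ.lineGraph.Adj w' z)
    (hww' : ¬ Γ.lineGraph.Adj w w') (hne : w ≠ w') : False := by
  rw [SimpleGraph.lineGraph_adj_iff_exists] at hxy hxz hyz hwx hwy hwz hw'x hw'y hw'z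
  have hvals : ∀ {e f : Γ.edgeSet}, e ≠ f → (e : Sym2 W) ≠ (f : Sym2 W) :=
    fun h hh => h (Subtype.ext hh)
  obtain ⟨v, hvx, hvy, hvz, hvw⟩ :=
    sym2_star (hvals hxy.1) (hvals hxz.1) (hvals hyz.1)
      (hvals hwx.1) (hvals hwy.1) (hvals hwz.1)
      hxy.2 hxz.2 hyz.2 hwx.2 hwy.2 hwz.2
  obtain ⟨v', hv'x, hv'y, hv'z, hv'w'⟩ :=
    sym2_star (hvals hxy.1) (hvals hxz.1) (hvals hyz.1)
      (hvals hw'x.1) (hvals hw'y.1) (hvals hw'z.1)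
      hxy.2 hxz.2 hyz.2 hw'x.2 hw'y.2 hw'z.2
  by_cases hvv : v = v'
  · exact hww' (SimpleGraph.lineGraph_adj_iff_exists.mpr ⟨hne, v, hvw, by rw [hvv]; exact hv'w'⟩)
  · exact hvals hxy.1 (Sym2.eq_of_ne_mem hvv hvx hv'x hvy hv'y)

private lemma powerGraph_adj_of_mem {G : Type} [Group G] [Finite G] {x y : G}
    (hne : x ≠ y) (h : x ∈ zpowers y) : (powerGraph G).Adj x y := by
  refine ⟨hne, Or.inl ?_⟩
  rw [← mem_powers_iff_mem_zpowers, Submonoid.mem_powers_iff] at h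
  obtain ⟨n, hn⟩ := h
  rcases Nat.eq_zero_or_pos n with rfl | hn0
  · refine ⟨orderOf y, orderOf_pos y, ?_⟩
    rw [pow_orderOf_eq_one]
    simpa using hn
  · exact ⟨n, hn0, hn⟩

private lemma mem_of_powerGraph_adj {G : Type} [Group G] {x y : G}
    (h : (powerGraph G).Adj x y) : x ∈ zpowers y ∨ y ∈ zpowers x := by
  rcases h.2 with ⟨n, -, hn⟩ | ⟨n, -, hn⟩
  · exact Or.inl (mem_zpowers_iff.mpr ⟨(n : ℤ), by rw [zpow_natCast]; exact hn⟩)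
  · exact Or.inr (mem_zpowers_iff.mpr ⟨(n : ℤ), by rw [zpow_natCast]; exact hn⟩)

private lemma mem_zpowers_of_orderOf_dvd {G : Type} [Group G] [Finite G] (hcyc : IsCyclic G)
    {u v : G} (hdvd : orderOf u ∣ orderOf v) : u ∈ zpowers v := by
  classical
  haveI := Fintype.ofFinite G
  haveI := hcyc
  have hpos : 0 < orderOf v := orderOf_pos v
  have hle : ({g : G | g ^ orderOf v = 1} : Finset G).card ≤ orderOf v :=
    IsCyclic.card_pow_eq_one_le hpos
  have hsub : (zpowers v : Set G).toFinset ⊆ ({g : G | g ^ orderOf v = 1} : Finset G) := by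
    intro g hg
    rw [Set.mem_toFinset, SetLike.mem_coe] at hg
    simp only [Finset.mem_filter, Finset.mem_univ, true_and]
    obtain ⟨k, hk⟩ := mem_zpowers_iff.mp hg
    rw [← hk, ← zpow_natCast, ← zpow_mul, mul_comm, zpow_mul, zpow_natCast,
      pow_orderOf_eq_one, one_zpow]
  have hcardT : (zpowers v : Set G).toFinset.card = orderOf v := by
    rw [Set.toFinset_card, ← Nat.card_eq_fintype_card]
    exact Nat.card_zpowers v
  have heq : (zpowers v : Set G).toFinset = ({g : G | g ^ orderOf v = 1} : Finset G) :=
    Finset.eq_of_subset_of_card_le hsub (by rw [hcardT]; exact hle)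
  have hu : u ∈ ({g : G | g ^ orderOf v = 1} : Finset G) := by
    simp only [Finset.mem_filter, Finset.mem_univ, true_and]
    exact orderOf_dvd_iff_pow_eq_one.mp hdvd
  rw [← heq, Set.mem_toFinset, SetLike.mem_coe] at hu
  exact hu

private lemma comparable_of_cyclic_pp {G : Type} [Group G] [Finite G] (hcyc : IsCyclic G)
    {p n : ℕ} (hp : p.Prime) (hcard : Nat.card G = p ^ n) (x y : G) :
    x ∈ zpowers y ∨ y ∈ zpowers x := by
  obtain ⟨a, -, ha⟩ := (Nat.dvd_prime_pow hp).1 (hcard ▸ orderOf_dvd_natCard x)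
  obtain ⟨b, -, hb⟩ := (Nat.dvd_prime_pow hp).1 (hcard ▸ orderOf_dvd_natCard y)
  rcases le_total a b with h | h
  · exact Or.inl (mem_zpowers_of_orderOf_dvd hcyc (by rw [ha, hb]; exact pow_dvd_pow p h))
  · exact Or.inr (mem_zpowers_of_orderOf_dvd hcyc (by rw [ha, hb]; exact pow_dvd_pow p h))

private def starG (G : Type) : SimpleGraph (Option G) where
  Adj a b := (a = none ∧ b ≠ none) ∨ (b = none ∧ a ≠ none)
  symm := ⟨fun a b h => by tauto⟩
  loopless := ⟨fun a h => by rcases h with ⟨h1, h2⟩ | ⟨h1, h2⟩ <;> exact h2 h1⟩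

private lemma starF_mem (G : Type) (g : G) : s(none, some g) ∈ (starG G).edgeSet := by
  rw [SimpleGraph.mem_edgeSet]
  change ((none : Option G) = none ∧ some g ≠ none) ∨ (some g = none ∧ (none : Option G) ≠ none)
  exact Or.inl ⟨rfl, by simp⟩

private def starF (G : Type) : G → (starG G).edgeSet := fun g => ⟨s(none, some g), starF_mem G g⟩

private lemma starF_bij (G : Type) : Function.Bijective (starF G) := by
  constructor
  · intro g g' h
    have h2 := congrArg Subtype.val h
    simp only [starF, Sym2.eq_iff] at h2
    rcases h2 with ⟨-, h2⟩ | ⟨h2, -⟩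
    · exact Option.some_injective _ h2
    · exact absurd h2.symm (by simp)
  · rintro ⟨e, he⟩
    revert he
    induction e using Sym2.ind with
    | _ u v =>
      intro he
      rw [SimpleGraph.mem_edgeSet] at he
      change (u = none ∧ v ≠ none) ∨ (v = none ∧ u ≠ none) at he
      rcases he with ⟨h1, h2⟩ | ⟨h1, h2⟩
      · obtain ⟨g, rfl⟩ := Option.ne_none_iff_exists'.mp h2
        exact ⟨g, Subtype.ext (by subst h1; rfl)⟩
      · obtain ⟨g, rfl⟩ := Option.ne_none_iff_exists'.mp h2
        exact ⟨g, Subtype.ext (by subst h1; exact Sym2.eq_swap)⟩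

theorem powerGraph_isLineGraph_iff_of_nilpotent (G : Type) [Group G] [Finite G]
    (hnil : Group.IsNilpotent G) :
    IsLineGraph (powerGraph G) ↔
      IsCyclic G ∧ ∃ (p n : ℕ), p.Prime ∧ Nat.card G = p ^ n := by
  constructor
  · rintro ⟨W, Γ, ⟨φ⟩⟩
    have hmap : ∀ {u v : G}, (powerGraph G).Adj u v → Γ.lineGraph.Adj (φ u) (φ v) :=
      fun h => φ.map_rel_iff.mpr h
    have hmap' : ∀ {u v : G}, ¬ (powerGraph G).Adj u v → ¬ Γ.lineGraph.Adj (φ u) (φ v) :=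
      fun h hh => h (φ.map_rel_iff.mp hh)
    have hinj : ∀ {u v : G}, u ≠ v → φ u ≠ φ v := fun h hh => h (φ.injective hh)
    -- Claw-freeness: among any three distinct nontrivial elements, some pair is adjacent
    have hcomp : ∀ a b c : G, a ≠ 1 → b ≠ 1 → c ≠ 1 → a ≠ b → a ≠ c → b ≠ c →
        ((powerGraph G).Adj a b ∨ (powerGraph G).Adj a c ∨ (powerGraph G).Adj b c) := by
      intro a b c ha hb hc hab hac hbc
      by_contra hcon
      push_neg at hcon
      obtain ⟨nab, nac, nbc⟩ := hcon
      have h1a : (powerGraph G).Adj 1 a := powerGraph_adj_of_mem (Ne.symm ha) (one_mem _)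
      have h1b : (powerGraph G).Adj 1 b := powerGraph_adj_of_mem (Ne.symm hb) (one_mem _)
      have h1c : (powerGraph G).Adj 1 c := powerGraph_adj_of_mem (Ne.symm hc) (one_mem _)
      exact no_claw' (hmap h1a) (hmap h1b) (hmap h1c)
        (hmap' nab) (hmap' nac) (hmap' nbc) (hinj hab) (hinj hac) (hinj hbc)
    -- G is cyclic
    have hcyc : IsCyclic G := by
      obtain ⟨a, ha⟩ := Finite.exists_max (fun x : G => Nat.card (zpowers x))
      by_cases htop : ∀ x : G, x ∈ zpowers a
      · exact ⟨⟨a, fun x => mem_zpowers_iff.mp (htop x)⟩⟩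
      exfalso
      push_neg at htop
      haveI hne : Nonempty {x : G // x ∉ zpowers a} := ⟨⟨htop.choose, htop.choose_spec⟩⟩
      obtain ⟨⟨b, hbA⟩, hbmax⟩ :=
        Finite.exists_max (fun x : {x : G // x ∉ zpowers a} => Nat.card (zpowers x.1))
      have hb1 : b ≠ 1 := fun h => hbA (h ▸ one_mem _)
      have h2b : 1 < Nat.card (zpowers b) :=
        (Subgroup.one_lt_card_iff_ne_bot _).mpr (zpowers_ne_bot.mpr hb1)
      have ha1 : a ≠ 1 :=
        zpowers_ne_bot.mp ((Subgroup.one_lt_card_iff_ne_bot _).mp (lt_of_lt_of_le h2b (ha b)))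
      have hAmax : ∀ c : G, a ∈ zpowers c → c ∈ zpowers a := by
        intro c hc
        have heq := Subgroup.eq_of_le_of_card_ge (zpowers_le.mpr hc) (ha c)
        rw [heq]
        exact mem_zpowers c
      have hBmax : ∀ c : G, c ∉ zpowers a → b ∈ zpowers c → c ∈ zpowers b := by
        intro c hcA hc
        have heq := Subgroup.eq_of_le_of_card_ge (zpowers_le.mpr hc) (hbmax ⟨c, hcA⟩)
        rw [heq]
        exact mem_zpowers c
      have hab' : a ∉ zpowers b := fun h => hbA (hAmax b h)
      set c := a * b with hcdef
      have hcA : c ∉ zpowers a := by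
        intro h
        refine hbA ?_
        have hb : b = a⁻¹ * c := by rw [hcdef, inv_mul_cancel_left]
        rw [hb]
        exact mul_mem (inv_mem (mem_zpowers a)) h
      have hc1 : c ≠ 1 := fun h => hcA (h ▸ one_mem _)
      have hca : c ≠ a := fun h => hb1 (by
        have := h
        rw [hcdef] at this
        exact mul_eq_left.mp this)
      have hcb : c ≠ b := fun h => ha1 (by
        have := h
        rw [hcdef] at this
        exact mul_eq_right.mp this)
      have habne : a ≠ b := fun h => hbA (h ▸ mem_zpowers a)
      rcases hcomp a b c ha1 hb1 hc1 habne (Ne.symm hca) (Ne.symm hcb) with h | h | h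
      · rcases mem_of_powerGraph_adj h with h' | h'
        · exact hbA (hAmax b h')
        · exact hbA h'
      · rcases mem_of_powerGraph_adj h with h' | h'
        · exact hcA (hAmax c h')
        · exact hcA h'
      · rcases mem_of_powerGraph_adj h with h' | h'
        · -- b ∈ zpowers c
          have hcb' : c ∈ zpowers b := hBmax c hcA h'
          refine hab' ?_
          have hae : a = c * b⁻¹ := by rw [hcdef, mul_inv_cancel_right]
          rw [hae]
          exact mul_mem hcb' (inv_mem (mem_zpowers b))
        · -- c ∈ zpowers b
          refine hab' ?_
          have hae : a = c * b⁻¹ := by rw [hcdef, mul_inv_cancel_right]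
          rw [hae]
          exact mul_mem h' (inv_mem (mem_zpowers b))
    refine ⟨hcyc, ?_⟩
    -- at most one prime divides the order
    have honep : ∀ p q : ℕ, p.Prime → q.Prime → p ∣ Nat.card G → q ∣ Nat.card G → p = q := by
      intro p q hp hq hpd hqd
      by_contra hpq
      haveI := Fact.mk hp
      haveI := Fact.mk hq
      obtain ⟨a, ha⟩ := exists_prime_orderOf_dvd_card' p hpd
      obtain ⟨b, hb⟩ := exists_prime_orderOf_dvd_card' q hqd
      have hcomm : Commute a b := by
        obtain ⟨g, hg⟩ := hcyc.exists_generator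
        obtain ⟨i, hi⟩ := mem_zpowers_iff.mp (hg a)
        obtain ⟨j, hj⟩ := mem_zpowers_iff.mp (hg b)
        rw [← hi, ← hj]
        exact (Commute.refl g).zpow_zpow i j
      have hco : Nat.Coprime (orderOf a) (orderOf b) := by
        rw [ha, hb]; exact (Nat.coprime_primes hp hq).mpr hpq
      set c := a * b with hcdef
      have hordc : orderOf c = p * q := by
        rw [hcdef, hcomm.orderOf_mul_eq_mul_orderOf_of_coprime hco, ha, hb]
      have hp2 := hp.two_le
      have hq2 := hq.two_le
      have hpq4 : 4 ≤ p * q := Nat.mul_le_mul hp2 hq2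
      have hcne1 : c ≠ 1 := by
        intro h; rw [h, orderOf_one] at hordc; omega
      have hcinv : c ≠ c⁻¹ := by
        intro h
        have h2 : c ^ 2 = 1 := by
          rw [pow_two]; nth_rewrite 2 [h]; exact mul_inv_cancel c
        have hdvd := orderOf_dvd_of_pow_eq_one h2
        rw [hordc] at hdvd
        have := Nat.le_of_dvd (by norm_num) hdvd
        omega
      have hcinv1 : c⁻¹ ≠ 1 := fun h => hcne1 (by rwa [inv_eq_one] at h)
      set A := c ^ q with hAdef
      set B := c ^ p with hBdef
      have hordA : orderOf A = p := by
        rw [hAdef, orderOf_pow, hordc, Nat.gcd_eq_right ⟨p, mul_comm p q⟩,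
          Nat.mul_div_cancel _ (by omega : 0 < q)]
      have hordB : orderOf B = q := by
        rw [hBdef, orderOf_pow, hordc, Nat.gcd_eq_right ⟨q, rfl⟩,
          Nat.mul_div_cancel_left _ (by omega : 0 < p)]
      have hA1 : A ≠ 1 := by intro h; rw [h, orderOf_one] at hordA; omega
      have hB1 : B ≠ 1 := by intro h; rw [h, orderOf_one] at hordB; omega
      have hAB : A ≠ B := by
        intro h; rw [h, hordB] at hordA; omega
      have hAc : A ≠ c := by
        intro h
        rw [h, hordc] at hordA
        nlinarith
      have hBc : B ≠ c := by
        intro h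
        rw [h, hordc] at hordB
        nlinarith
      have hAcinv : A ≠ c⁻¹ := by
        intro h
        rw [h, orderOf_inv, hordc] at hordA
        nlinarith
      have hBcinv : B ≠ c⁻¹ := by
        intro h
        rw [h, orderOf_inv, hordc] at hordB
        nlinarith
      have hAmem : A ∈ zpowers c := mem_zpowers_iff.mpr ⟨(q : ℤ), by simp [hAdef]⟩
      have hBmem : B ∈ zpowers c := mem_zpowers_iff.mpr ⟨(p : ℤ), by simp [hBdef]⟩
      have hAmem' : A ∈ zpowers c⁻¹ := by rwa [zpowers_inv]
      have hBmem' : B ∈ zpowers c⁻¹ := by rwa [zpowers_inv]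
      -- adjacencies in the power graph
      have adjccinv : (powerGraph G).Adj c c⁻¹ :=
        (powerGraph_adj_of_mem (Ne.symm hcinv) (inv_mem (mem_zpowers c))).symm
      have adjc1 : (powerGraph G).Adj c 1 :=
        (powerGraph_adj_of_mem (Ne.symm hcne1) (one_mem _)).symm
      have adjcinv1 : (powerGraph G).Adj c⁻¹ 1 :=
        (powerGraph_adj_of_mem (Ne.symm hcinv1) (one_mem _)).symm
      have adjAc : (powerGraph G).Adj A c := powerGraph_adj_of_mem hAc hAmem
      have adjAcinv : (powerGraph G).Adj A c⁻¹ := powerGraph_adj_of_mem hAcinv hAmem'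
      have adjA1 : (powerGraph G).Adj A 1 :=
        (powerGraph_adj_of_mem (Ne.symm hA1) (one_mem _)).symm
      have adjBc : (powerGraph G).Adj B c := powerGraph_adj_of_mem hBc hBmem
      have adjBcinv : (powerGraph G).Adj B c⁻¹ := powerGraph_adj_of_mem hBcinv hBmem'
      have adjB1 : (powerGraph G).Adj B 1 :=
        (powerGraph_adj_of_mem (Ne.symm hB1) (one_mem _)).symm
      have hnadjAB : ¬ (powerGraph G).Adj A B := by
        intro h
        rcases mem_of_powerGraph_adj h with h' | h'
        · have hdvd := orderOf_dvd_of_mem_zpowers h'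
          rw [hordA, hordB] at hdvd
          exact hpq ((Nat.prime_dvd_prime_iff_eq hp hq).mp hdvd)
        · have hdvd := orderOf_dvd_of_mem_zpowers h'
          rw [hordA, hordB] at hdvd
          exact hpq ((Nat.prime_dvd_prime_iff_eq hq hp).mp hdvd).symm
      exact no_K5e' (hmap adjccinv) (hmap adjc1) (hmap adjcinv1)
        (hmap adjAc) (hmap adjAcinv) (hmap adjA1)
        (hmap adjBc) (hmap adjBcinv) (hmap adjB1)
        (hmap' hnadjAB) (hinj hAB)
    by_cases h1 : Nat.card G = 1
    · exact ⟨2, 0, Nat.prime_two, by rw [h1, pow_zero]⟩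
    · have hpos : Nat.card G ≠ 0 := Nat.card_pos.ne'
      exact ⟨(Nat.card G).minFac, (Nat.card G).primeFactorsList.length, Nat.minFac_prime h1,
        Nat.eq_prime_pow_of_unique_prime_dvd hpos
          (fun hd hdvd => honep _ _ hd (Nat.minFac_prime h1) hdvd (Nat.minFac_dvd _))⟩
  · rintro ⟨hcyc, p, n, hp, hcard⟩
    refine ⟨Option G, starG G, ⟨⟨Equiv.ofBijective _ (starF_bij G), ?_⟩⟩⟩
    intro u v
    simp only [Equiv.ofBijective_apply]
    rw [SimpleGraph.lineGraph_adj_iff_exists]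
    constructor
    · rintro ⟨hne, -⟩
      have huv : u ≠ v := fun h => hne (by rw [h])
      rcases comparable_of_cyclic_pp hcyc hp hcard u v with h | h
      · exact powerGraph_adj_of_mem huv h
      · exact (powerGraph_adj_of_mem (Ne.symm huv) h).symm
    · intro h
      refine ⟨fun hh => h.1 ((starF_bij G).1 hh), none, ?_, ?_⟩
      · exact Sym2.mem_mk_left none (some u)
      · exact Sym2.mem_mk_left none (some v)
end

section
/- Let G be a finite cyclic group. Then the power graph P(G) is a line graph (i.e., there exists a graph Γ such that P(G) is isomorphic to the line graph of Γ) if and only if |G| is a power of a single prime (including |G| = 1). -/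
/-! ### Auxiliary lemmas -/

/-- The star graph on `Option V` with center `none`. -/
def starGraph (V : Type) : SimpleGraph (Option V) where
  Adj a b := a ≠ b ∧ (a = none ∨ b = none)
  symm := by constructor; rintro a b ⟨h1, h2⟩; exact ⟨h1.symm, h2.symm⟩
  loopless := by constructor; rintro a ⟨h, -⟩; exact h rfl

/-- A complete graph is a line graph (of a star). -/
lemma isLineGraph_of_complete {V : Type} (H : SimpleGraph V)
    (h : ∀ x y : V, x ≠ y → H.Adj x y) : IsLineGraph H := by
  refine ⟨Option V, starGraph V, ⟨?_⟩⟩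
  have hf : ∀ v : V, s(none, some v) ∈ (starGraph V).edgeSet := by
    intro v
    rw [SimpleGraph.mem_edgeSet]
    exact ⟨by simp, Or.inl rfl⟩
  have hbij : Function.Bijective (fun v : V => (⟨s(none, some v), hf v⟩ : (starGraph V).edgeSet)) := by
    constructor
    · intro x y hxy
      have : s((none : Option V), some x) = s(none, some y) := congrArg Subtype.val hxy
      rw [Sym2.eq_iff] at this
      rcases this with ⟨-, h2⟩ | ⟨h1, -⟩
      · exact Option.some_injective _ h2
      · simp at h1
    · rintro ⟨e, he⟩
      induction e using Sym2.ind with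
      | _ a b =>
        rw [SimpleGraph.mem_edgeSet] at he
        obtain ⟨hne, hnone⟩ := he
        rcases hnone with rfl | rfl
        · match b, hne with
          | some v, _ => exact ⟨v, rfl⟩
        · match a, hne with
          | some v, _ => exact ⟨v, Subtype.ext (Sym2.eq_swap)⟩
  refine ⟨Equiv.ofBijective _ hbij, ?_⟩
  intro x y
  rw [SimpleGraph.lineGraph_adj_iff_exists]
  constructor
  · rintro ⟨hne, -⟩
    have : x ≠ y := fun hxy => hne (by rw [hxy])
    exact h x y this
  · intro hadj
    have hxy : x ≠ y := hadj.ne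
    refine ⟨fun hc => hxy (hbij.1 hc), none, ?_, ?_⟩
    · exact Sym2.mem_iff.mpr (Or.inl rfl)
    · exact Sym2.mem_iff.mpr (Or.inl rfl)

/-- The key obstruction: a graph containing this configuration is not a line graph. -/
lemma not_isLineGraph_of_config {V : Type} (H : SimpleGraph V) {t u v d1 d2 d3 : V}
    (hd12 : d1 ≠ d2) (hd13 : d1 ≠ d3) (hd23 : d2 ≠ d3)
    (htu : t ≠ u) (htv : t ≠ v) (huv : u ≠ v)
    (ht1 : H.Adj t d1) (ht2 : H.Adj t d2) (ht3 : H.Adj t d3)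
    (hu1 : H.Adj u d1) (hu2 : H.Adj u d2) (hu3 : H.Adj u d3)
    (hv1 : H.Adj v d1) (hv2 : H.Adj v d2) (hv3 : H.Adj v d3)
    (ntu : ¬ H.Adj t u) (ntv : ¬ H.Adj t v) : ¬ IsLineGraph H := by
  rintro ⟨W, Γ, ⟨φ⟩⟩
  have hinj : Function.Injective φ := φ.toEquiv.injective
  -- no shared endpoint between φ t and φ u / φ v
  have hnoU : ∀ w : W, w ∈ ((φ t : Γ.edgeSet) : Sym2 W) → w ∉ ((φ u : Γ.edgeSet) : Sym2 W) := by
    intro w hw hw'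
    exact ntu (φ.map_adj_iff.mp (SimpleGraph.lineGraph_adj_iff_exists.mpr
      ⟨fun hc => htu (hinj hc), w, hw, hw'⟩))
  have hnoV : ∀ w : W, w ∈ ((φ t : Γ.edgeSet) : Sym2 W) → w ∉ ((φ v : Γ.edgeSet) : Sym2 W) := by
    intro w hw hw'
    exact ntv (φ.map_adj_iff.mp (SimpleGraph.lineGraph_adj_iff_exists.mpr
      ⟨fun hc => htv (hinj hc), w, hw, hw'⟩))
  -- key claim
  have key : ∀ (di dj : Γ.edgeSet), di ≠ dj → ∀ c : W,
      c ∈ (di : Sym2 W) → c ∈ (dj : Sym2 W) → c ∈ ((φ t : Γ.edgeSet) : Sym2 W) →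
      Γ.lineGraph.Adj (φ u) di → Γ.lineGraph.Adj (φ u) dj →
      Γ.lineGraph.Adj (φ v) di → Γ.lineGraph.Adj (φ v) dj → False := by
    intro di dj hne c hci hcj hct hudi hudj hvdi hvdj
    have hcU : c ∉ ((φ u : Γ.edgeSet) : Sym2 W) := hnoU c hct
    have hcV : c ∉ ((φ v : Γ.edgeSet) : Sym2 W) := hnoV c hct
    set xi := Sym2.Mem.other hci with hxidef
    set xj := Sym2.Mem.other hcj with hxjdef
    have hdi : s(c, xi) = (di : Sym2 W) := Sym2.other_spec hci
    have hdj : s(c, xj) = (dj : Sym2 W) := Sym2.other_spec hcj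
    have hxij : xi ≠ xj := by
      intro hx
      apply hne
      apply Subtype.ext
      rw [← hdi, ← hdj, hx]
    have hmem : ∀ (E : Γ.edgeSet), c ∉ (E : Sym2 W) →
        Γ.lineGraph.Adj E di → Γ.lineGraph.Adj E dj →
        xi ∈ (E : Sym2 W) ∧ xj ∈ (E : Sym2 W) := by
      intro E hcE hEdi hEdj
      obtain ⟨-, wi, hwiE, hwidi⟩ := SimpleGraph.lineGraph_adj_iff_exists.mp hEdi
      obtain ⟨-, wj, hwjE, hwjdj⟩ := SimpleGraph.lineGraph_adj_iff_exists.mp hEdj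
      rw [← hdi] at hwidi
      rw [← hdj] at hwjdj
      rcases Sym2.mem_iff.mp hwidi with rfl | rfl
      · exact absurd hwiE hcE
      · rcases Sym2.mem_iff.mp hwjdj with rfl | rfl
        · exact absurd hwjE hcE
        · exact ⟨hwiE, hwjE⟩
    obtain ⟨hUi, hUj⟩ := hmem (φ u) hcU hudi hudj
    obtain ⟨hVi, hVj⟩ := hmem (φ v) hcV hvdi hvdj
    have hUV : ((φ u : Γ.edgeSet) : Sym2 W) = ((φ v : Γ.edgeSet) : Sym2 W) :=
      Sym2.eq_of_ne_mem hxij hUi hUj hVi hVj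
    exact huv (hinj (Subtype.ext hUV))
  -- decompose φ t
  obtain ⟨b, hT⟩ := Sym2.mem_iff_exists.mp (Sym2.out_fst_mem ((φ t : Γ.edgeSet) : Sym2 W))
  set a := ((φ t : Γ.edgeSet) : Sym2 W).out.1 with hadef
  have hamem : a ∈ ((φ t : Γ.edgeSet) : Sym2 W) := by rw [hT]; exact Sym2.mem_iff.mpr (Or.inl rfl)
  have hbmem : b ∈ ((φ t : Γ.edgeSet) : Sym2 W) := by rw [hT]; exact Sym2.mem_iff.mpr (Or.inr rfl)
  -- each φ d_i contains a or b
  have hshare : ∀ (x : V), H.Adj t x →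
      a ∈ ((φ x : Γ.edgeSet) : Sym2 W) ∨ b ∈ ((φ x : Γ.edgeSet) : Sym2 W) := by
    intro x hx
    obtain ⟨-, w, hwT, hwX⟩ := SimpleGraph.lineGraph_adj_iff_exists.mp (φ.map_adj_iff.mpr hx)
    rw [hT] at hwT
    rcases Sym2.mem_iff.mp hwT with rfl | rfl
    · exact Or.inl hwX
    · exact Or.inr hwX
  have h1 := hshare d1 ht1
  have h2 := hshare d2 ht2
  have h3 := hshare d3 ht3
  have hD12 : (φ d1 : Γ.edgeSet) ≠ φ d2 := fun hc => hd12 (hinj hc)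
  have hD13 : (φ d1 : Γ.edgeSet) ≠ φ d3 := fun hc => hd13 (hinj hc)
  have hD23 : (φ d2 : Γ.edgeSet) ≠ φ d3 := fun hc => hd23 (hinj hc)
  have hU1 := φ.map_adj_iff.mpr hu1
  have hU2 := φ.map_adj_iff.mpr hu2
  have hU3 := φ.map_adj_iff.mpr hu3
  have hV1 := φ.map_adj_iff.mpr hv1
  have hV2 := φ.map_adj_iff.mpr hv2
  have hV3 := φ.map_adj_iff.mpr hv3
  rcases h1 with h1 | h1 <;> rcases h2 with h2 | h2 <;> rcases h3 with h3 | h3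
  · exact key _ _ hD12 a h1 h2 hamem hU1 hU2 hV1 hV2
  · exact key _ _ hD12 a h1 h2 hamem hU1 hU2 hV1 hV2
  · exact key _ _ hD13 a h1 h3 hamem hU1 hU3 hV1 hV3
  · exact key _ _ hD23 b h2 h3 hbmem hU2 hU3 hV2 hV3
  · exact key _ _ hD23 a h2 h3 hamem hU2 hU3 hV2 hV3
  · exact key _ _ hD13 b h1 h3 hbmem hU1 hU3 hV1 hV3
  · exact key _ _ hD12 b h1 h2 hbmem hU1 hU2 hV1 hV2
  · exact key _ _ hD12 b h1 h2 hbmem hU1 hU2 hV1 hV2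

/-- In a cyclic group of prime power order, any two elements are comparable by powers. -/
lemma exists_pow_eq_of_prime_pow {G : Type} [Group G] [Finite G] (hcyc : IsCyclic G)
    {p k : ℕ} (hp : p.Prime) (hc : Nat.card G = p ^ k) (x y : G) :
    (∃ c : ℕ, y ^ c = x) ∨ (∃ c : ℕ, x ^ c = y) := by
  obtain ⟨g, hg⟩ := hcyc.exists_generator
  set n := Nat.card G with hn
  have hordg : orderOf g = n := orderOf_eq_card_of_forall_mem_zpowers hg
  obtain ⟨a, ha⟩ := Subgroup.mem_zpowers_iff.mp (hg x)
  obtain ⟨b, hb⟩ := Subgroup.mem_zpowers_iff.mp (hg y)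
  have hgn : g ^ (n : ℤ) = 1 := by
    rw [zpow_natCast, ← hordg]
    exact pow_orderOf_eq_one g
  have claim : ∀ a' b' : ℤ, (Int.gcd b' n ∣ Int.gcd a' n) → ∃ c : ℕ, (g ^ b') ^ c = g ^ a' := by
    intro a' b' hdvd
    have h1 : ((Int.gcd b' n : ℕ) : ℤ) ∣ a' :=
      dvd_trans (Int.natCast_dvd_natCast.mpr hdvd) (Int.gcd_dvd_left _ _)
    obtain ⟨w, hw⟩ := h1
    have hbez : ((Int.gcd b' n : ℕ) : ℤ) = b' * Int.gcdA b' n + n * Int.gcdB b' n :=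
      Int.gcd_eq_gcd_ab b' n
    have hzpow : (g ^ b') ^ (Int.gcdA b' n * w) = g ^ a' := by
      rw [← zpow_mul]
      have ha'' : a' = b' * (Int.gcdA b' n * w) + (n : ℤ) * (Int.gcdB b' n * w) := by
        rw [hw, hbez]; ring
      rw [ha'', zpow_add, zpow_mul g (n : ℤ), hgn, one_zpow, mul_one]
    have hfin : g ^ a' ∈ Subgroup.zpowers (g ^ b') :=
      Subgroup.mem_zpowers_iff.mpr ⟨Int.gcdA b' n * w, hzpow⟩
    have hfo : IsOfFinOrder (g ^ b') := isOfFinOrder_of_finite _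
    obtain ⟨c, hc'⟩ := (Submonoid.mem_powers_iff _ _).mp (hfo.mem_powers_iff_mem_zpowers.mpr hfin)
    exact ⟨c, hc'⟩
  have hga : Int.gcd a n ∣ n := Int.natCast_dvd_natCast.mp (Int.gcd_dvd_right _ _)
  have hgb : Int.gcd b n ∣ n := Int.natCast_dvd_natCast.mp (Int.gcd_dvd_right _ _)
  rw [hc] at hga hgb
  obtain ⟨i, hi, hia⟩ := (Nat.dvd_prime_pow hp).mp hga
  obtain ⟨j, hj, hjb⟩ := (Nat.dvd_prime_pow hp).mp hgb
  rcases le_total j i with hji | hij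
  · left
    obtain ⟨c, hcc⟩ := claim a b (by rw [hc, hia, hjb]; exact pow_dvd_pow p hji)
    exact ⟨c, by rw [← ha, ← hb]; exact hcc⟩
  · right
    obtain ⟨c, hcc⟩ := claim b a (by rw [hc, hia, hjb]; exact pow_dvd_pow p hij)
    exact ⟨c, by rw [← ha, ← hb]; exact hcc⟩

/-- The power graph of a cyclic group of prime power order is complete. -/
lemma powerGraph_complete_of_prime_pow {G : Type} [Group G] [Finite G] (hcyc : IsCyclic G)
    {p k : ℕ} (hp : p.Prime) (hc : Nat.card G = p ^ k) :
    ∀ x y : G, x ≠ y → (powerGraph G).Adj x y := by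
  intro x y hxy
  refine ⟨hxy, ?_⟩
  have hx : ∀ z w : G, (∃ c : ℕ, z ^ c = w) → ∃ c : ℕ, 0 < c ∧ z ^ c = w := by
    rintro z w ⟨c, hcc⟩
    rcases Nat.eq_zero_or_pos c with rfl | hcpos
    · refine ⟨orderOf z, orderOf_pos z, ?_⟩
      rw [pow_orderOf_eq_one, ← hcc, pow_zero]
    · exact ⟨c, hcpos, hcc⟩
  rcases exists_pow_eq_of_prime_pow hcyc hp hc x y with ⟨c, hcc⟩ | ⟨c, hcc⟩
  · exact Or.inl (hx y x ⟨c, hcc⟩)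
  · exact Or.inr (hx x y ⟨c, hcc⟩)

theorem powerGraph_isLineGraph_iff_of_cyclic (G : Type) [Group G] [Finite G]
    (hcyc : IsCyclic G) :
    IsLineGraph (powerGraph G) ↔ ∃ (p n : ℕ), p.Prime ∧ Nat.card G = p ^ n := by
  constructor
  · intro hline
    by_contra hnp
    push_neg at hnp
    set n := Nat.card G with hn
    have hn0 : n ≠ 0 := Nat.card_pos.ne'
    have hn1 : n ≠ 1 := fun h => hnp 2 0 Nat.prime_two (by simp [h])
    have hP : n.minFac.Prime := Nat.minFac_prime hn1
    have hq0 : ∃ q : ℕ, q.Prime ∧ q ∣ n ∧ q ≠ n.minFac := by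
      by_contra hcon
      push_neg at hcon
      exact hnp n.minFac n.primeFactorsList.length hP
        (Nat.eq_prime_pow_of_unique_prime_dvd hn0 (fun {d} hd hdn => hcon d hd hdn))
    obtain ⟨q0, hq0p, hq0n, hq0ne⟩ := hq0
    obtain ⟨p, q, hp, hq, hpn, hqn, hpq, hq2⟩ :
        ∃ p q : ℕ, p.Prime ∧ q.Prime ∧ p ∣ n ∧ q ∣ n ∧ p ≠ q ∧ q ≠ 2 := by
      rcases eq_or_ne q0 2 with rfl | hne
      · exact ⟨2, n.minFac, Nat.prime_two, hP, hq0n, Nat.minFac_dvd n, hq0ne, hq0ne.symm⟩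
      · exact ⟨n.minFac, q0, hP, hq0p, Nat.minFac_dvd n, hq0n, hq0ne.symm, hne⟩
    obtain ⟨g, hg⟩ := hcyc.exists_generator
    have hordg : orderOf g = n := orderOf_eq_card_of_forall_mem_zpowers hg
    have hp0 : 0 < p := hp.pos
    have hq0' : 0 < q := hq.pos
    have hnp0 : 0 < n / p := Nat.div_pos (Nat.le_of_dvd (Nat.pos_of_ne_zero hn0) hpn) hp0
    have hnq0 : 0 < n / q := Nat.div_pos (Nat.le_of_dvd (Nat.pos_of_ne_zero hn0) hqn) hq0'
    -- orders of t and u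
    have hordpow : ∀ m : ℕ, m ∣ n → orderOf (g ^ (n / m)) = m := by
      intro m hm
      rw [orderOf_pow, hordg, Nat.gcd_eq_right (Nat.div_dvd_of_dvd hm),
        Nat.div_div_self hm hn0]
    set t := g ^ (n / p) with htdef
    set u := g ^ (n / q) with hudef
    set v := u * u with hvdef
    have hordt : orderOf t = p := hordpow p hpn
    have hordu : orderOf u = q := hordpow q hqn
    have hordv : orderOf v = q := by
      have : v = u ^ 2 := by rw [hvdef, pow_two]
      rw [this, orderOf_pow, hordu]
      have hcop : Nat.gcd q 2 = 1 := (Nat.coprime_primes hq Nat.prime_two).mpr hq2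
      rw [hcop, Nat.div_one]
    -- n has at least 6 elements
    have hpq6 : 6 ≤ n := by
      have hcop : Nat.Coprime p q := (Nat.coprime_primes hp hq).mpr hpq
      have : p * q ∣ n := Nat.Coprime.mul_dvd_of_dvd_of_dvd hcop hpn hqn
      have h6 : 6 ≤ p * q := by
        have hq3 : 3 ≤ q := by
          have := hq.two_le
          omega
        calc 6 = 2 * 3 := rfl
        _ ≤ p * q := Nat.mul_le_mul hp.two_le hq3
      exact le_trans h6 (Nat.le_of_dvd (Nat.pos_of_ne_zero hn0) this)
    have hpltn : p ≠ n := by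
      intro h
      have hd : q ∣ p := h ▸ hqn
      rcases hp.eq_one_or_self_of_dvd q hd with h' | h'
      · exact hq.one_lt.ne' h'
      · exact hpq h'.symm
    have hqltn : q ≠ n := by
      intro h
      have hd : p ∣ q := h ▸ hpn
      rcases hq.eq_one_or_self_of_dvd p hd with h' | h'
      · exact hp.one_lt.ne' h'
      · exact hpq h'
    -- helper: adjacency of powers of g to 1, g, g⁻¹
    have hinvpow : ∀ m : ℕ, 0 < m → (g⁻¹) ^ (m * (n - 1)) = g ^ m := by
      intro m hm
      rw [inv_pow, inv_eq_iff_mul_eq_one, ← pow_add]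
      have heq : m * (n - 1) + m = n * m := by
        have h1 : 1 ≤ n := Nat.pos_of_ne_zero hn0
        calc m * (n - 1) + m = m * (n - 1 + 1) := by ring
        _ = m * n := by rw [Nat.sub_add_cancel h1]
        _ = n * m := Nat.mul_comm m n
      rw [heq, pow_mul, ← hordg, pow_orderOf_eq_one, one_pow]
    have hadjd : ∀ m : ℕ, 0 < m → orderOf (g ^ m) ≠ 1 → orderOf (g ^ m) ≠ n →
        (powerGraph G).Adj (g ^ m) 1 ∧ (powerGraph G).Adj (g ^ m) g ∧
        (powerGraph G).Adj (g ^ m) g⁻¹ := by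
      intro m hm h1 hn'
      have hne1 : g ^ m ≠ 1 := by
        intro h; rw [h, orderOf_one] at h1; exact h1 rfl
      have hneg : g ^ m ≠ g := by
        intro h; rw [h, hordg] at hn'; exact hn' rfl
      have hnegi : g ^ m ≠ g⁻¹ := by
        intro h; rw [h, orderOf_inv, hordg] at hn'; exact hn' rfl
      refine ⟨⟨hne1, Or.inr ⟨orderOf (g ^ m), ?_, pow_orderOf_eq_one _⟩⟩,
        ⟨hneg, Or.inl ⟨m, hm, rfl⟩⟩,
        ⟨hnegi, Or.inl ⟨m * (n - 1), ?_, hinvpow m hm⟩⟩⟩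
      · exact orderOf_pos _
      · have : 1 ≤ n - 1 := by omega
        exact Nat.mul_pos hm this
    have hvpow : v = g ^ (2 * (n / q)) := by
      rw [hvdef, hudef, ← pow_add]; ring_nf
    have ht1 := hadjd (n / p) hnp0 (by rw [hordt]; exact hp.one_lt.ne') (by rw [hordt]; exact hpltn)
    have hu1 := hadjd (n / q) hnq0 (by rw [hordu]; exact hq.one_lt.ne') (by rw [hordu]; exact hqltn)
    have hv1 := hadjd (2 * (n / q)) (by omega) (by rw [← hvpow, hordv]; exact hq.one_lt.ne')
      (by rw [← hvpow, hordv]; exact hqltn)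
    rw [← hvpow] at hv1
    -- nonadjacency t u, t v
    have hnadj : ∀ w : G, orderOf w = q → ¬ (powerGraph G).Adj t w := by
      rintro w hw ⟨hne, ⟨c, hc0, hcc⟩ | ⟨c, hc0, hcc⟩⟩
      · have : orderOf t ∣ orderOf w := hcc ▸ orderOf_pow_dvd c
        rw [hordt, hw] at this
        exact hpq ((Nat.prime_dvd_prime_iff_eq hp hq).mp this)
      · have : orderOf w ∣ orderOf t := hcc ▸ orderOf_pow_dvd c
        rw [hordt, hw] at this
        exact hpq ((Nat.prime_dvd_prime_iff_eq hq hp).mp this).symm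
    -- distinctness
    have htu : t ≠ u := fun h => hpq (by rw [← hordt, h, hordu])
    have htv : t ≠ v := fun h => hpq (by rw [← hordt, h, hordv])
    have huv : u ≠ v := by
      intro h
      have : u = 1 := by
        have := h
        rw [hvdef] at this
        nth_rewrite 1 [← mul_one u] at this
        exact (mul_left_cancel this).symm
      rw [this, orderOf_one] at hordu
      exact hq.one_lt.ne' hordu.symm
    have hd12 : (1 : G) ≠ g := by
      intro h
      rw [← h, orderOf_one] at hordg
      omega
    have hd13 : (1 : G) ≠ g⁻¹ := by
      intro h
      have : g = 1 := by rw [← inv_inv g, ← h, inv_one]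
      rw [this, orderOf_one] at hordg
      omega
    have hd23 : g ≠ g⁻¹ := by
      intro h
      have h2 : g ^ 2 = 1 := by rw [pow_two]; nth_rewrite 2 [h]; exact mul_inv_cancel g
      have := orderOf_dvd_of_pow_eq_one h2
      rw [hordg] at this
      have := Nat.le_of_dvd (by omega) this
      omega
    exact not_isLineGraph_of_config (powerGraph G) hd12 hd13 hd23 htu htv huv
      ht1.1 ht1.2.1 ht1.2.2 hu1.1 hu1.2.1 hu1.2.2 hv1.1 hv1.2.1 hv1.2.2
      (hnadj u hordu) (hnadj v hordv) hline
  · rintro ⟨p, k, hp, hc⟩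
    exact isLineGraph_of_complete _ (powerGraph_complete_of_prime_pow hcyc hp hc)
end

section
/- Let G be a finite non-abelian nilpotent group such that |G| has at least three distinct prime divisors. Then the proper power graph P**(G) is not a line graph: there is no graph Γ such that P**(G) is isomorphic to the line graph of Γ. -/
set_option linter.unusedSectionVars false

section Helpers

open Subgroup

variable {G : Type} [Group G] [Finite G]

lemma isPGroup_zpowers' {p n : ℕ} {x : G} (h : orderOf x = p ^ n) :
    IsPGroup p (Subgroup.zpowers x) := by
  intro g
  refine ⟨n, ?_⟩
  have hd : orderOf (g : G) ∣ p ^ n := h ▸ orderOf_dvd_of_mem_zpowers g.2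
  ext
  simpa using orderOf_dvd_iff_pow_eq_one.mp hd

lemma commute_of_mem_zpowers' {c d : G} (h : d ∈ Subgroup.zpowers c) : Commute c d := by
  obtain ⟨k, hk⟩ := h
  exact hk ▸ (Commute.refl c).zpow_right k

/-- In a finite group, membership in zpowers is equivalent to being a positive power. -/
lemma mem_zpowers_iff_pos_pow {x y : G} :
    x ∈ Subgroup.zpowers y ↔ ∃ n : ℕ, 0 < n ∧ y ^ n = x := by
  constructor
  · intro h
    obtain ⟨n, hn⟩ := mem_powers_iff_mem_zpowers.mpr h
    refine ⟨n + orderOf y, by have := orderOf_pos y; omega, ?_⟩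
    simp only at hn
    rw [pow_add, pow_orderOf_eq_one, mul_one, hn]
  · rintro ⟨n, -, rfl⟩
    exact ⟨(n : ℤ), by simp⟩

/-- If `m` is coprime to the order of `d`, then `d ∈ zpowers (d ^ m)`. -/
lemma mem_zpowers_pow_self {d : G} {m : ℕ} (h : Nat.Coprime m (orderOf d)) :
    d ∈ Subgroup.zpowers (d ^ m) := by
  have hb := Nat.gcd_eq_gcd_ab m (orderOf d)
  rw [h] at hb
  refine ⟨Nat.gcdA m (orderOf d), ?_⟩
  show (d ^ m) ^ Nat.gcdA m (orderOf d) = d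
  calc (d ^ m) ^ Nat.gcdA m (orderOf d)
      = d ^ ((m : ℤ) * Nat.gcdA m (orderOf d)) := by
        rw [← zpow_natCast d m, ← zpow_mul]
    _ = d ^ ((1 : ℤ) - (orderOf d : ℤ) * Nat.gcdB m (orderOf d)) := by
        congr 1; omega
    _ = d := by
        rw [zpow_sub, zpow_mul, zpow_natCast d (orderOf d), pow_orderOf_eq_one, one_zpow,
          zpow_one]
        group

set_option linter.unusedSectionVars false

/-- If `c` and `u` commute and have coprime orders, then `u ∈ zpowers (c * u)`. -/
lemma mem_zpowers_mul_right {c u : G} (hc : Commute c u)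
    (hco : Nat.Coprime (orderOf c) (orderOf u)) :
    u ∈ Subgroup.zpowers (c * u) := by
  have h1 : (c * u) ^ orderOf c = u ^ orderOf c := by
    rw [hc.mul_pow, pow_orderOf_eq_one, one_mul]
  have h2 : u ∈ Subgroup.zpowers (u ^ orderOf c) := mem_zpowers_pow_self hco
  have h3 : Subgroup.zpowers (u ^ orderOf c) ≤ Subgroup.zpowers (c * u) := by
    rw [← h1]
    exact Subgroup.zpowers_le.mpr (pow_mem (Subgroup.mem_zpowers _) _)
  exact h3 h2

/-- Projection lemma: if `d ∈ zpowers (c * u)` with `c, u` commuting, and the order of `d`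
is coprime to the order of `u`, then `d ∈ zpowers c`. -/
lemma mem_zpowers_of_mem_zpowers_mul {c u d : G} (hc : Commute c u)
    (hd : d ∈ Subgroup.zpowers (c * u)) (hco : Nat.Coprime (orderOf u) (orderOf d)) :
    d ∈ Subgroup.zpowers c := by
  obtain ⟨k, hk⟩ := hd
  simp only at hk
  have h1 : d ^ orderOf u ∈ Subgroup.zpowers c := by
    have : d ^ (orderOf u : ℤ) = c ^ (k * orderOf u) * u ^ (k * orderOf u) := by
      rw [← hk, ← hc.mul_zpow, ← zpow_mul]
    have hu : u ^ (k * (orderOf u : ℤ)) = 1 := by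
      rw [mul_comm, zpow_mul, zpow_natCast, pow_orderOf_eq_one, one_zpow]
    rw [hu, mul_one] at this
    rw [← zpow_natCast d (orderOf u), this]
    exact zpow_mem (Subgroup.mem_zpowers c) _
  have h2 : d ∈ Subgroup.zpowers (d ^ orderOf u) := mem_zpowers_pow_self hco
  exact (Subgroup.zpowers_le.mpr h1) h2

/-- In a finite nilpotent group, elements of coprime prime power orders commute. -/
lemma commute_of_isNilpotent_of_prime_pow_orders (hnil : Group.IsNilpotent G)
    {p q : ℕ} (hp : p.Prime) (hq : q.Prime) (hpq : p ≠ q) {x y : G}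
    (hx : ∃ n, orderOf x = p ^ n) (hy : ∃ n, orderOf y = q ^ n) : Commute x y := by
  haveI : Fact p.Prime := ⟨hp⟩
  haveI : Fact q.Prime := ⟨hq⟩
  have hnorm : ∀ (r : ℕ) (_ : Fact r.Prime) (P : Sylow r G), (↑P : Subgroup G).Normal :=
    ((isNilpotent_of_finite_tfae (G := G)).out 0 3).mp hnil
  obtain ⟨nx, hnx⟩ := hx
  obtain ⟨ny, hny⟩ := hy
  have hxP : IsPGroup p (Subgroup.zpowers x) := by
    intro g
    refine ⟨nx, ?_⟩
    have : orderOf (g : G) ∣ p ^ nx := hnx ▸ orderOf_dvd_of_mem_zpowers g.2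
    have h1 : (g : G) ^ p ^ nx = 1 := orderOf_dvd_iff_pow_eq_one.mp this
    ext
    simpa using h1
  have hyQ : IsPGroup q (Subgroup.zpowers y) := by
    intro g
    refine ⟨ny, ?_⟩
    have : orderOf (g : G) ∣ q ^ ny := hny ▸ orderOf_dvd_of_mem_zpowers g.2
    have h1 : (g : G) ^ q ^ ny = 1 := orderOf_dvd_iff_pow_eq_one.mp this
    ext
    simpa using h1
  obtain ⟨P, hP⟩ := hxP.exists_le_sylow
  obtain ⟨Q, hQ⟩ := hyQ.exists_le_sylow
  have hdisj : Disjoint (P : Subgroup G) (Q : Subgroup G) :=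
    IsPGroup.disjoint_of_ne p q hpq _ _ P.isPGroup' Q.isPGroup'
  exact Subgroup.commute_of_normal_of_disjoint _ _ (hnorm p ‹_› P) (hnorm q ‹_› Q) hdisj x y
    (hP (Subgroup.mem_zpowers x)) (hQ (Subgroup.mem_zpowers y))

lemma exists_prime_pow_order_not_commute_aux (b : G) :
    ∀ (N : ℕ) (a : G), orderOf a ≤ N → ¬ Commute a b →
    ∃ (p : ℕ) (a' : G), p.Prime ∧ (∃ n, orderOf a' = p ^ n) ∧ ¬ Commute a' b := by
  intro N
  induction N with
  | zero => intro a hN _; have := orderOf_pos a; omega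
  | succ N ih =>
    intro a hN hab
    by_cases hpp : IsPrimePow (orderOf a)
    · obtain ⟨p, k, hp, hk, hpk⟩ := hpp
      exact ⟨p, a, hp.nat_prime, ⟨k, hpk.symm⟩, hab⟩
    · have ha1 : a ≠ 1 := fun h => hab (h ▸ Commute.one_left b)
      have hoa1 : 1 < orderOf a := by
        have h0 := orderOf_pos a
        have h1 : orderOf a ≠ 1 := fun h => ha1 (orderOf_eq_one_iff.mp h)
        omega
      set n := orderOf a with hn
      have hn0 : n ≠ 0 := by omega
      set p := n.minFac with hpdef
      have hp : p.Prime := Nat.minFac_prime (by omega)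
      set m := p ^ n.factorization p with hm
      set k := n / m with hk
      have hmk : m * k = n := Nat.ordProj_mul_ordCompl_eq_self n p
      have hco : Nat.Coprime m k := Nat.Coprime.pow_left _ (Nat.coprime_ordCompl hp hn0)
      have hfp : 0 < n.factorization p :=
        Nat.Prime.factorization_pos_of_dvd hp hn0 (Nat.minFac_dvd n)
      have hm1 : 1 < m := Nat.one_lt_pow hfp.ne' hp.one_lt
      have hk1 : 1 < k := by
        by_contra h
        have hk0 : k ≠ 0 := by
          intro h0; rw [h0, mul_zero] at hmk; omega
        have h1 : 1 ≤ k := Nat.one_le_iff_ne_zero.mpr hk0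
        have : k = 1 := le_antisymm (Nat.not_lt.mp h) h1
        rw [this, mul_one] at hmk
        exact hpp ⟨p, n.factorization p, hp.prime, hfp, hmk⟩
      -- Bezout split
      have hb := Nat.gcd_eq_gcd_ab m k
      rw [hco] at hb
      set y := a ^ ((k : ℤ) * Nat.gcdB m k) with hy
      set z := a ^ ((m : ℤ) * Nat.gcdA m k) with hz
      have hzy : z * y = a := by
        rw [hz, hy, ← zpow_add, ← hb, Nat.cast_one, zpow_one]
      have hoy : orderOf y ∣ m := by
        apply orderOf_dvd_iff_pow_eq_one.mpr
        rw [hy, ← zpow_natCast, ← zpow_mul]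
        have : (k : ℤ) * Nat.gcdB m k * m = (n : ℤ) * Nat.gcdB m k := by
          push_cast [← hmk]; ring
        rw [this, zpow_mul, zpow_natCast, hn, pow_orderOf_eq_one, one_zpow]
      have hoz : orderOf z ∣ k := by
        apply orderOf_dvd_iff_pow_eq_one.mpr
        rw [hz, ← zpow_natCast, ← zpow_mul]
        have : (m : ℤ) * Nat.gcdA m k * k = (n : ℤ) * Nat.gcdA m k := by
          push_cast [← hmk]; ring
        rw [this, zpow_mul, zpow_natCast, hn, pow_orderOf_eq_one, one_zpow]
      have hmn : m < n := by nlinarith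
      have hkn : k < n := by nlinarith
      by_cases hyb : Commute y b
      · by_cases hzb : Commute z b
        · exact absurd (hzy ▸ hzb.mul_left hyb) hab
        · have : orderOf z ≤ N := by
            have := Nat.le_of_dvd (by omega) hoz
            omega
          exact ih z this hzb
      · have : orderOf y ≤ N := by
          have := Nat.le_of_dvd (by omega) hoy
          omega
        exact ih y this hyb

/-- From a non-commuting pair, extract an element of prime power order
that still fails to commute with `b`. -/
lemma exists_prime_pow_order_not_commute (a b : G) (hab : ¬ Commute a b) :
    ∃ (p : ℕ) (a' : G), p.Prime ∧ (∃ n, orderOf a' = p ^ n) ∧ ¬ Commute a' b :=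
  exists_prime_pow_order_not_commute_aux b (orderOf a) a le_rfl hab

end Helpers


/-- A graph containing an induced claw (K_{1,3}) is not a line graph. -/
lemma not_isLineGraph_of_claw {V : Type} (H : SimpleGraph V) (x y1 y2 y3 : V)
    (h1 : H.Adj x y1) (h2 : H.Adj x y2) (h3 : H.Adj x y3)
    (h12 : ¬ H.Adj y1 y2) (h13 : ¬ H.Adj y1 y3) (h23 : ¬ H.Adj y2 y3)
    (n12 : y1 ≠ y2) (n13 : y1 ≠ y3) (n23 : y2 ≠ y3) :
    ¬ IsLineGraph H := by
  rintro ⟨W, Γ, ⟨f⟩⟩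
  -- transfer the claw into the line graph
  have a1 : Γ.lineGraph.Adj (f x) (f y1) := f.map_adj_iff.mpr h1
  have a2 : Γ.lineGraph.Adj (f x) (f y2) := f.map_adj_iff.mpr h2
  have a3 : Γ.lineGraph.Adj (f x) (f y3) := f.map_adj_iff.mpr h3
  have b12 : ¬ Γ.lineGraph.Adj (f y1) (f y2) := fun h => h12 (f.map_adj_iff.mp h)
  have b13 : ¬ Γ.lineGraph.Adj (f y1) (f y3) := fun h => h13 (f.map_adj_iff.mp h)
  have b23 : ¬ Γ.lineGraph.Adj (f y2) (f y3) := fun h => h23 (f.map_adj_iff.mp h)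
  have m12 : f y1 ≠ f y2 := fun h => n12 (f.injective h)
  have m13 : f y1 ≠ f y3 := fun h => n13 (f.injective h)
  have m23 : f y2 ≠ f y3 := fun h => n23 (f.injective h)
  -- the center edge has two endpoints
  obtain ⟨u, v, huv⟩ : ∃ u v, ((f x : Sym2 W)) = s(u, v) := by
    induction (f x : Sym2 W) using Sym2.inductionOn with
    | hf u v => exact ⟨u, v, rfl⟩
  obtain ⟨-, w1, hw1, hw1'⟩ := SimpleGraph.lineGraph_adj_iff_exists.mp a1
  obtain ⟨-, w2, hw2, hw2'⟩ := SimpleGraph.lineGraph_adj_iff_exists.mp a2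
  obtain ⟨-, w3, hw3, hw3'⟩ := SimpleGraph.lineGraph_adj_iff_exists.mp a3
  rw [huv, Sym2.mem_iff] at hw1 hw2 hw3
  have key : ∀ (e1 e2 : Γ.edgeSet) (w : W), e1 ≠ e2 → w ∈ (e1 : Sym2 W) → w ∈ (e2 : Sym2 W) →
      Γ.lineGraph.Adj e1 e2 := fun e1 e2 w hne hm1 hm2 =>
    SimpleGraph.lineGraph_adj_iff_exists.mpr ⟨hne, w, hm1, hm2⟩
  rcases hw1 with rfl | rfl <;> rcases hw2 with rfl | rfl <;> rcases hw3 with rfl | rfl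
  · exact b12 (key _ _ _ m12 hw1' hw2')
  · exact b12 (key _ _ _ m12 hw1' hw2')
  · exact b13 (key _ _ _ m13 hw1' hw3')
  · exact b23 (key _ _ _ m23 hw2' hw3')
  · exact b23 (key _ _ _ m23 hw2' hw3')
  · exact b13 (key _ _ _ m13 hw1' hw3')
  · exact b12 (key _ _ _ m12 hw1' hw2')
  · exact b12 (key _ _ _ m12 hw1' hw2')


theorem properPowerGraph_not_isLineGraph_of_three_primes (G : Type) [Group G] [Finite G]
    (hnil : Group.IsNilpotent G) (hna : ∃ a b : G, a * b ≠ b * a)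
    (hp : 3 ≤ (Nat.card G).primeFactors.card) :
    ¬ IsLineGraph (properPowerGraph G) := by
  classical
  -- adjacency of the power graph in terms of zpowers
  have adj_iff : ∀ x y : G, (powerGraph G).Adj x y ↔
      x ≠ y ∧ (x ∈ Subgroup.zpowers y ∨ y ∈ Subgroup.zpowers x) := by
    intro x y
    show (x ≠ y ∧ _) ↔ _
    rw [mem_zpowers_iff_pos_pow, mem_zpowers_iff_pos_pow]
  -- find noncommuting elements of p-power order for one prime p
  obtain ⟨a0, b0, hab0⟩ := hna
  have hnc0 : ¬ Commute a0 b0 := hab0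
  obtain ⟨p1, a1, hp1, hoa1, hnc1⟩ := exists_prime_pow_order_not_commute a0 b0 hnc0
  obtain ⟨p2, b1, hp2, hob1, hnc2⟩ :=
    exists_prime_pow_order_not_commute b0 a1 (fun h => hnc1 h.symm)
  have hpeq : p2 = p1 := by
    by_contra hne
    exact hnc2 (commute_of_isNilpotent_of_prime_pow_orders hnil hp2 hp1 hne hob1 hoa1)
  subst hpeq
  set p := p2
  have hp' : p.Prime := hp2
  haveI : Fact p.Prime := ⟨hp'⟩
  -- rename: a, b of p-power order with ¬ Commute a b
  set a := b1
  set b := a1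
  have hnc : ¬ Commute a b := hnc2
  obtain ⟨na, hoa⟩ := hob1
  obtain ⟨nb, hob⟩ := hoa1
  have ha1 : a ≠ 1 := fun h => hnc (h ▸ Commute.one_left b)
  have hb1 : b ≠ 1 := fun h => hnc (h ▸ Commute.one_right a)
  have hab1 : a * b ≠ 1 := by
    intro h
    have hb' : b = a⁻¹ := eq_inv_of_mul_eq_one_right h
    exact hnc (hb' ▸ (Commute.refl a).inv_right)
  have hna1 : na ≠ 0 := by
    intro h
    rw [h, pow_zero] at hoa
    exact ha1 (orderOf_eq_one_iff.mp hoa)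
  have hnb1 : nb ≠ 0 := by
    intro h
    rw [h, pow_zero] at hob
    exact hb1 (orderOf_eq_one_iff.mp hob)
  -- a*b also has p-power order, using the unique normal Sylow p-subgroup
  have hnorm := ((isNilpotent_of_finite_tfae (G := G)).out 0 3).mp hnil
  have hoab : ∃ n, orderOf (a * b) = p ^ n := by
    obtain ⟨P, hPa⟩ := (isPGroup_zpowers' hoa).exists_le_sylow
    obtain ⟨Q, hQb⟩ := (isPGroup_zpowers' hob).exists_le_sylow
    haveI := Sylow.unique_of_normal P (hnorm p ‹_› P)
    have hQP : Q = P := Subsingleton.elim Q P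
    have hmem : a * b ∈ (P : Subgroup G) :=
      mul_mem (hPa (Subgroup.mem_zpowers a)) (hQP ▸ hQb (Subgroup.mem_zpowers b))
    obtain ⟨k, hk⟩ := P.isPGroup' ⟨a * b, hmem⟩
    have hk' : (a * b) ^ p ^ k = 1 := by
      have := congrArg Subtype.val hk
      simpa using this
    obtain ⟨m, -, hm⟩ := (Nat.dvd_prime_pow hp').mp (orderOf_dvd_iff_pow_eq_one.mpr hk')
    exact ⟨m, hm⟩
  -- find two other primes q, r dividing |G|
  have hpdvd : p ∣ Nat.card G :=
    dvd_trans (hoa ▸ dvd_pow_self p hna1) (orderOf_dvd_natCard a)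
  have hcard0 : Nat.card G ≠ 0 := Nat.card_pos.ne'
  have hpmem : p ∈ (Nat.card G).primeFactors := Nat.mem_primeFactors.mpr ⟨hp', hpdvd, hcard0⟩
  have hcard2 : 1 < ((Nat.card G).primeFactors.erase p).card := by
    rw [Finset.card_erase_of_mem hpmem]; omega
  obtain ⟨q, r, hqmem, hrmem, hqr⟩ := Finset.one_lt_card_iff.mp hcard2
  have hqp : q ≠ p := (Finset.mem_erase.mp hqmem).1
  have hrp : r ≠ p := (Finset.mem_erase.mp hrmem).1
  have hq : q.Prime := Nat.prime_of_mem_primeFactors (Finset.mem_erase.mp hqmem).2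
  have hr : r.Prime := Nat.prime_of_mem_primeFactors (Finset.mem_erase.mp hrmem).2
  haveI : Fact q.Prime := ⟨hq⟩
  haveI : Fact r.Prime := ⟨hr⟩
  obtain ⟨gq, hogq⟩ := exists_prime_orderOf_dvd_card' q
    (Nat.dvd_of_mem_primeFactors (Finset.mem_erase.mp hqmem).2)
  obtain ⟨gr, hogr⟩ := exists_prime_orderOf_dvd_card' r
    (Nat.dvd_of_mem_primeFactors (Finset.mem_erase.mp hrmem).2)
  -- the element u of order q*r
  have hcqr : Commute gq gr :=
    commute_of_isNilpotent_of_prime_pow_orders hnil hq hr hqr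
      ⟨1, by rw [hogq, pow_one]⟩ ⟨1, by rw [hogr, pow_one]⟩
  set u := gq * gr with hu
  have hou : orderOf u = q * r := by
    rw [hu, hcqr.orderOf_mul_eq_mul_orderOf_of_coprime, hogq, hogr]
    rw [hogq, hogr]
    exact (Nat.coprime_primes hq hr).mpr hqr
  -- coprimality and commuting facts
  have hcop : ∀ n : ℕ, Nat.Coprime (p ^ n) (q * r) := fun n =>
    Nat.Coprime.pow_left n
      (Nat.Coprime.mul_right ((Nat.coprime_primes hp' hq).mpr (Ne.symm hqp))
        ((Nat.coprime_primes hp' hr).mpr (Ne.symm hrp)))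
  have hcommu : ∀ c : G, (∃ n, orderOf c = p ^ n) → Commute c u := by
    rintro c ⟨n, hn⟩
    exact (commute_of_isNilpotent_of_prime_pow_orders hnil hp' hq (Ne.symm hqp)
        ⟨n, hn⟩ ⟨1, by rw [hogq, pow_one]⟩).mul_right
      (commute_of_isNilpotent_of_prime_pow_orders hnil hp' hr (Ne.symm hrp)
        ⟨n, hn⟩ ⟨1, by rw [hogr, pow_one]⟩)
  have hcou : ∀ c : G, (∃ n, orderOf c = p ^ n) → Nat.Coprime (orderOf c) (orderOf u) := by
    rintro c ⟨n, hn⟩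
    rw [hn, hou]
    exact hcop n
  have hmemu : ∀ c : G, (∃ n, orderOf c = p ^ n) → u ∈ Subgroup.zpowers (c * u) :=
    fun c hc => mem_zpowers_mul_right (hcommu c hc) (hcou c hc)
  have hproj : ∀ c d : G, (∃ n, orderOf c = p ^ n) → (∃ n, orderOf d = p ^ n) →
      d ∈ Subgroup.zpowers (c * u) → d ∈ Subgroup.zpowers c :=
    fun c d hc hd hm => mem_zpowers_of_mem_zpowers_mul (hcommu c hc) hm ((hcou d hd).symm)
  have hqndvd : ∀ n : ℕ, ¬ q ∣ p ^ n := fun n h =>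
    hqp ((Nat.prime_dvd_prime_iff_eq hq hp').mp (hq.dvd_of_dvd_pow h))
  have hpndvd : ¬ p ∣ q * r := by
    intro h
    rcases (Nat.Prime.dvd_mul hp').mp h with h | h
    · exact hqp ((Nat.prime_dvd_prime_iff_eq hp' hq).mp h).symm
    · exact hrp ((Nat.prime_dvd_prime_iff_eq hp' hr).mp h).symm
  have hqdvdu : q ∣ orderOf u := hou ▸ dvd_mul_right q r
  -- the vertex set
  set S := {x : G | ¬ (powerGraph G).IsDominatingVertex x} with hS
  have hmemS : ∀ v d : G, d ≠ v → ¬ (powerGraph G).Adj v d → v ∈ S :=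
    fun v d hne hnadj h => hnadj (h d hne)
  -- u is a non-dominating vertex, witnessed by a
  have hu_nadj_a : ¬ (powerGraph G).Adj u a := by
    rw [adj_iff]
    rintro ⟨-, h | h⟩
    · exact hqndvd na (dvd_trans (hqdvdu) (hoa ▸ orderOf_dvd_of_mem_zpowers h))
    · refine hpndvd (dvd_trans ?_ (hou ▸ orderOf_dvd_of_mem_zpowers h))
      exact hoa ▸ dvd_pow_self p hna1
  have hau : a ≠ u := by
    intro h
    exact hqndvd na (hoa ▸ h ▸ hqdvdu)
  have huS : u ∈ S := hmemS u a hau hu_nadj_a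
  -- generic fact: c*u is non-dominating whenever c has p-power order and
  -- fails to commute with some d of p-power order
  have hcuS : ∀ c d : G, (∃ n, orderOf c = p ^ n) → (∃ n, orderOf d = p ^ n) →
      ¬ Commute c d → (c * u) ∈ S := by
    rintro c d hc hd hncd
    obtain ⟨nd, hnd⟩ := id hd
    have hdne : d ≠ c * u := by
      intro h
      exact hncd (h ▸ ((Commute.refl c).mul_right (hcommu c hc)))
    refine hmemS (c * u) d hdne ?_
    rw [adj_iff]
    rintro ⟨-, h | h⟩
    · -- c*u ∈ zpowers d : then u ∈ zpowers d, q ∣ p-power, absurd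
      have : u ∈ Subgroup.zpowers d := Subgroup.zpowers_le.mpr h (hmemu c hc)
      exact hqndvd nd (dvd_trans hqdvdu (hnd ▸ orderOf_dvd_of_mem_zpowers this))
    · exact hncd (commute_of_mem_zpowers' (hproj c d hc hd h))
  -- noncommuting facts for the pairs
  have hncaab : ¬ Commute a (a * b) := by
    intro h
    have h1 := h.eq
    rw [mul_assoc] at h1
    exact hnc (mul_left_cancel h1)
  have hncbab : ¬ Commute b (a * b) := by
    intro h
    have h1 := h.eq
    rw [← mul_assoc] at h1
    exact hnc (mul_right_cancel h1).symm
  have h_ab_nc_a : ¬ Commute (a * b) a := fun h => hncaab h.symm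
  -- vertices of the claw
  have hy1S : (a * u) ∈ S := hcuS a b ⟨na, hoa⟩ ⟨nb, hob⟩ hnc
  have hy2S : (b * u) ∈ S := hcuS b a ⟨nb, hob⟩ ⟨na, hoa⟩ (fun h => hnc h.symm)
  have hy3S : ((a * b) * u) ∈ S := hcuS (a * b) a hoab ⟨na, hoa⟩ h_ab_nc_a
  -- center-leaf adjacency
  have hadj_center : ∀ c : G, c ≠ 1 → (∃ n, orderOf c = p ^ n) →
      (powerGraph G).Adj u (c * u) := by
    intro c hc1 hc
    rw [adj_iff]
    constructor
    · intro h
      exact hc1 (by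
        have : c * u = 1 * u := by rw [one_mul, ← h]
        exact mul_right_cancel this)
    · exact Or.inl (hmemu c hc)
  -- leaves pairwise non-adjacent
  have hnadj_leaves : ∀ c1 c2 : G, (∃ n, orderOf c1 = p ^ n) → (∃ n, orderOf c2 = p ^ n) →
      ¬ Commute c1 c2 → ¬ (powerGraph G).Adj (c1 * u) (c2 * u) := by
    intro c1 c2 hc1 hc2 hnc12 hadj
    rw [adj_iff] at hadj
    obtain ⟨-, h | h⟩ := hadj
    · -- c1*u ∈ zpowers (c2*u)
      have hu2 : u ∈ Subgroup.zpowers (c2 * u) := hmemu c2 hc2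
      have hc1mem : c1 ∈ Subgroup.zpowers (c2 * u) := by
        have := mul_mem h (inv_mem hu2)
        rwa [mul_inv_cancel_right] at this
      exact hnc12 (commute_of_mem_zpowers' (hproj c2 c1 hc2 hc1 hc1mem)).symm
    · have hu1 : u ∈ Subgroup.zpowers (c1 * u) := hmemu c1 hc1
      have hc2mem : c2 ∈ Subgroup.zpowers (c1 * u) := by
        have := mul_mem h (inv_mem hu1)
        rwa [mul_inv_cancel_right] at this
      exact hnc12 (commute_of_mem_zpowers' (hproj c1 c2 hc1 hc2 hc2mem))
  -- assemble the claw in the proper power graph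
  apply not_isLineGraph_of_claw (properPowerGraph G)
    ⟨u, huS⟩ ⟨a * u, hy1S⟩ ⟨b * u, hy2S⟩ ⟨(a * b) * u, hy3S⟩
  · exact hadj_center a ha1 ⟨na, hoa⟩
  · exact hadj_center b hb1 ⟨nb, hob⟩
  · exact hadj_center (a * b) hab1 hoab
  · exact hnadj_leaves a b ⟨na, hoa⟩ ⟨nb, hob⟩ hnc
  · exact hnadj_leaves a (a * b) ⟨na, hoa⟩ hoab hncaab
  · exact hnadj_leaves b (a * b) ⟨nb, hob⟩ hoab hncbab
  · intro h
    rw [Subtype.mk_eq_mk] at h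
    exact hnc (mul_right_cancel h ▸ Commute.refl a)
  · intro h
    rw [Subtype.mk_eq_mk] at h
    have : a = a * b := mul_right_cancel h
    exact hb1 (by
      have : a * 1 = a * b := by rw [mul_one]; exact this
      exact (mul_left_cancel this).symm)
  · intro h
    rw [Subtype.mk_eq_mk] at h
    have : b = a * b := mul_right_cancel h
    exact ha1 (by
      have : 1 * b = a * b := by rw [one_mul]; exact this
      exact (mul_right_cancel this).symm)
end

section
/- Let G be a finite non-abelian nilpotent group such that |G| has exactly two distinct prime divisors. Then the proper power graph P**(G) is not a line graph: there is no graph Γ such that P**(G) is isomorphic to the line graph of Γ. -/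
open Subgroup

/-- Line graphs are claw-free. -/
lemma not_claw_of_isLineGraph {V : Type} {H : SimpleGraph V}
    (hL : IsLineGraph H) {v x y w : V}
    (hvx : H.Adj v x) (hvy : H.Adj v y) (hvw : H.Adj v w)
    (nxy : x ≠ y) (nxw : x ≠ w) (nyw : y ≠ w)
    (hxy : ¬ H.Adj x y) (hxw : ¬ H.Adj x w) (hyw : ¬ H.Adj y w) : False := by
  obtain ⟨W, Γ, ⟨φ⟩⟩ := hL
  have inj : Function.Injective φ := φ.injective
  have a1 : Γ.lineGraph.Adj (φ v) (φ x) := φ.map_adj_iff.mpr hvx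
  have a2 : Γ.lineGraph.Adj (φ v) (φ y) := φ.map_adj_iff.mpr hvy
  have a3 : Γ.lineGraph.Adj (φ v) (φ w) := φ.map_adj_iff.mpr hvw
  have nadj12 : ¬ Γ.lineGraph.Adj (φ x) (φ y) := fun h => hxy (φ.map_adj_iff.mp h)
  have nadj13 : ¬ Γ.lineGraph.Adj (φ x) (φ w) := fun h => hxw (φ.map_adj_iff.mp h)
  have nadj23 : ¬ Γ.lineGraph.Adj (φ y) (φ w) := fun h => hyw (φ.map_adj_iff.mp h)
  have ne12 : φ x ≠ φ y := fun h => nxy (inj h)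
  have ne13 : φ x ≠ φ w := fun h => nxw (inj h)
  have ne23 : φ y ≠ φ w := fun h => nyw (inj h)
  obtain ⟨a, b, hab⟩ : ∃ a b : W, (↑(φ v) : Sym2 W) = s(a, b) :=
    Sym2.ind (fun a b => ⟨a, b, rfl⟩) (↑(φ v) : Sym2 W)
  have mem_of_adj : ∀ e : Γ.edgeSet, Γ.lineGraph.Adj (φ v) e →
      a ∈ (e : Sym2 W) ∨ b ∈ (e : Sym2 W) := by
    intro e he
    obtain ⟨-, u, hu1, hu2⟩ := SimpleGraph.lineGraph_adj_iff_exists.mp he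
    rw [hab] at hu1
    rcases Sym2.mem_iff.mp hu1 with rfl | rfl
    · exact Or.inl hu2
    · exact Or.inr hu2
  have adj12 : ∀ u : W, u ∈ (↑(φ x) : Sym2 W) → u ∈ (↑(φ y) : Sym2 W) → False :=
    fun u h h' => nadj12 (SimpleGraph.lineGraph_adj_iff_exists.mpr ⟨ne12, u, h, h'⟩)
  have adj13 : ∀ u : W, u ∈ (↑(φ x) : Sym2 W) → u ∈ (↑(φ w) : Sym2 W) → False :=
    fun u h h' => nadj13 (SimpleGraph.lineGraph_adj_iff_exists.mpr ⟨ne13, u, h, h'⟩)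
  have adj23 : ∀ u : W, u ∈ (↑(φ y) : Sym2 W) → u ∈ (↑(φ w) : Sym2 W) → False :=
    fun u h h' => nadj23 (SimpleGraph.lineGraph_adj_iff_exists.mpr ⟨ne23, u, h, h'⟩)
  rcases mem_of_adj _ a1 with h1 | h1 <;> rcases mem_of_adj _ a2 with h2 | h2 <;>
    rcases mem_of_adj _ a3 with h3 | h3 <;>
    first
      | exact adj12 _ h1 h2
      | exact adj13 _ h1 h3
      | exact adj23 _ h2 h3

section GroupAux

variable {G : Type} [Group G] [Finite G]

lemma orderOf_dvd_of_mem {p : ℕ} {P : Subgroup G} (hP : IsPGroup p P) {g : G} (hg : g ∈ P) :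
    ∃ k, orderOf g ∣ p ^ k := by
  obtain ⟨k, hk⟩ := hP ⟨g, hg⟩
  refine ⟨k, orderOf_dvd_of_pow_eq_one ?_⟩
  have := Subtype.ext_iff.mp hk
  simpa using this

lemma exists_sylow_container (hnil : Group.IsNilpotent G) (p : ℕ) [Fact p.Prime] :
    ∃ P : Subgroup G, IsPGroup p P ∧ P.Normal ∧
      ∀ x : G, (∃ i, orderOf x ∣ p ^ i) → x ∈ P := by
  have hnorm := ((isNilpotent_of_finite_tfae (G := G)).out 0 3).mp hnil
  obtain ⟨P⟩ : Nonempty (Sylow p G) := inferInstance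
  refine ⟨P, P.isPGroup', hnorm p ‹_› P, ?_⟩
  rintro x ⟨i, hi⟩
  have hx : IsPGroup p (zpowers x) := by
    obtain ⟨k, -, hk⟩ := (Nat.dvd_prime_pow Fact.out).mp hi
    exact IsPGroup.of_card (by rw [Nat.card_zpowers]; exact hk)
  obtain ⟨Q, hQ⟩ := hx.exists_le_sylow
  haveI := Sylow.unique_of_normal Q (hnorm p ‹_› Q)
  have hQP : Q = P := Subsingleton.elim Q P
  exact hQP ▸ hQ (mem_zpowers x)

lemma commute_coprime (hnil : Group.IsNilpotent G) {p q : ℕ} [Fact p.Prime] [Fact q.Prime]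
    (hne : p ≠ q) {x y : G} (hx : ∃ i, orderOf x ∣ p ^ i) (hy : ∃ j, orderOf y ∣ q ^ j) :
    Commute x y := by
  obtain ⟨P, hPp, hPn, hPmem⟩ := exists_sylow_container hnil p
  obtain ⟨Q, hQq, hQn, hQmem⟩ := exists_sylow_container hnil q
  have hdisj : Disjoint P Q := by
    rw [Subgroup.disjoint_def]
    intro g hgP hgQ
    obtain ⟨i, hi⟩ := orderOf_dvd_of_mem hPp hgP
    obtain ⟨j, hj⟩ := orderOf_dvd_of_mem hQq hgQ
    have hco : Nat.Coprime (p ^ i) (q ^ j) := ((Nat.coprime_primes Fact.out Fact.out).mpr hne).pow i j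
    rw [← orderOf_eq_one_iff]
    exact Nat.dvd_one.mp (hco ▸ Nat.dvd_gcd hi hj)
  exact Subgroup.commute_of_normal_of_disjoint P Q hPn hQn hdisj x y (hPmem x hx) (hQmem y hy)

lemma split_element {p q : ℕ} (hp : p.Prime) (hq : q.Prime) (hpq : p ≠ q)
    (hfac : (Nat.card G).primeFactors ⊆ {p, q}) (g : G) :
    ∃ u v : G, g = u * v ∧
      (∃ i, orderOf u ∣ p ^ i) ∧ (∃ j, orderOf v ∣ q ^ j) := by
  have hN : Nat.card G ≠ 0 := Nat.card_pos.ne'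
  set n := orderOf g with hn
  have hn0 : n ≠ 0 := (orderOf_pos g).ne'
  have hdvd : n ∣ Nat.card G := orderOf_dvd_natCard g
  have hsub : n.primeFactors ⊆ ({p, q} : Finset ℕ) :=
    (Nat.primeFactors_mono hdvd hN).trans hfac
  have hdvd2 : n ∣ p ^ n * q ^ n := by
    calc n = n.factorization.prod (· ^ ·) := (Nat.factorization_prod_pow_eq_self hn0).symm
      _ = ∏ r ∈ n.primeFactors, r ^ n.factorization r := rfl
      _ ∣ ∏ r ∈ ({p, q} : Finset ℕ), r ^ n.factorization r :=
          Finset.prod_dvd_prod_of_subset _ _ _ hsub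
      _ = p ^ n.factorization p * q ^ n.factorization q := Finset.prod_pair hpq
      _ ∣ p ^ n * q ^ n :=
          mul_dvd_mul (pow_dvd_pow _ (Nat.factorization_lt p hn0).le)
            (pow_dvd_pow _ (Nat.factorization_lt q hn0).le)
  have hco : Nat.Coprime (p ^ n) (q ^ n) := ((Nat.coprime_primes hp hq).mpr hpq).pow n n
  obtain ⟨k, hk1, hk2⟩ := Nat.chineseRemainder hco 1 0
  refine ⟨g ^ k, g ^ ((1 : ℤ) - k), ?_, ⟨n, ?_⟩, ⟨n, ?_⟩⟩
  · rw [← zpow_natCast g k, ← zpow_add]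
    norm_num
  · -- orderOf (g ^ k) ∣ p ^ n
    apply orderOf_dvd_of_pow_eq_one
    rw [← pow_mul]
    apply orderOf_dvd_iff_pow_eq_one.mp
    obtain ⟨t, rfl⟩ := (Nat.modEq_zero_iff_dvd.mp hk2)
    exact hdvd2.trans ⟨t, by ring⟩
  · -- orderOf (g ^ (1 - k)) ∣ q ^ n
    apply orderOf_dvd_of_pow_eq_one
    rw [← zpow_natCast (g ^ ((1:ℤ) - k)), ← zpow_mul]
    apply orderOf_dvd_iff_zpow_eq_one.mp
    obtain ⟨t, ht⟩ := hk1.dvd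
    push_cast at ht
    have : ((1 : ℤ) - k) * (q ^ n : ℕ) = ((p ^ n * q ^ n : ℕ) : ℤ) * t := by
      push_cast
      rw [ht]; ring
    rw [this]
    exact Dvd.dvd.mul_right (Int.natCast_dvd_natCast.mpr hdvd2) t

lemma claw_case {p q : ℕ} (hnil : Group.IsNilpotent G) [hpF : Fact p.Prime] [hqF : Fact q.Prime]
    (hpq : p ≠ q) (hqdvd : q ∣ Nat.card G)
    {x y : G} (hxo : ∃ i, orderOf x ∣ p ^ i) (hyo : ∃ j, orderOf y ∣ p ^ j)
    (hncomm : ¬ Commute x y) : ¬ IsLineGraph (properPowerGraph G) := by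
  intro hL
  have hp : p.Prime := Fact.out
  have hq : q.Prime := Fact.out
  obtain ⟨P, hPp, hPn, hPmem⟩ := exists_sylow_container hnil p
  obtain ⟨c, hc⟩ := exists_prime_orderOf_dvd_card' q hqdvd
  have hcord : ∃ j, orderOf c ∣ q ^ j := ⟨1, by rw [hc, pow_one]⟩
  have hc1 : c ≠ 1 := by
    intro h
    rw [h, orderOf_one] at hc
    exact hq.ne_one hc.symm
  have hxP : x ∈ P := hPmem x hxo
  have hyP : y ∈ P := hPmem y hyo
  have hzP : x * y ∈ P := mul_mem hxP hyP
  -- elements of P that are powers of c are trivial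
  have keyE : ∀ u ∈ P, ∀ s : ℤ, u = c ^ s → u = 1 := by
    intro u hu s hus
    obtain ⟨k, hk⟩ := orderOf_dvd_of_mem hPp hu
    have hcq : c ^ q = 1 := by rw [← hc]; exact pow_orderOf_eq_one c
    have h2 : orderOf u ∣ q := by
      apply orderOf_dvd_of_pow_eq_one
      rw [hus, ← zpow_natCast (c ^ s), ← zpow_mul, mul_comm, zpow_mul, zpow_natCast, hcq,
        one_zpow]
    have hco : Nat.Coprime q (p ^ k) :=
      Nat.Coprime.pow_right _ ((Nat.coprime_primes hq hp).mpr hpq.symm)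
    rw [← orderOf_eq_one_iff]
    exact Nat.dvd_one.mp (hco ▸ Nat.dvd_gcd h2 hk)
  -- basic non-identity facts
  have hx1 : x ≠ 1 := by rintro rfl; exact hncomm (Commute.one_left y)
  have hy1 : y ≠ 1 := by rintro rfl; exact hncomm (Commute.one_right x)
  have hz1 : x * y ≠ 1 := by
    intro h
    have : x⁻¹ = y := inv_eq_of_mul_eq_one_right h
    exact hncomm (this ▸ (Commute.refl x).inv_right)
  have hxy_ne : x ≠ y := by rintro rfl; exact hncomm (Commute.refl x)
  have hcomm_of_zpow : ∀ u v : G, v ∈ zpowers u → Commute u v := by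
    intro u v hv
    obtain ⟨m, rfl⟩ := mem_zpowers_iff.mp hv
    exact (Commute.refl u).zpow_right m
  -- incomparabilities
  have hyx : y ∉ zpowers x := fun h => hncomm (hcomm_of_zpow x y h)
  have hxy' : x ∉ zpowers y := fun h => hncomm ((hcomm_of_zpow y x h).symm)
  have hzx : x * y ∉ zpowers x := by
    intro h
    have h2 := (hcomm_of_zpow x (x * y) h).eq
    exact hncomm (mul_left_cancel (h2.trans (mul_assoc x y x)))
  have hxz : x ∉ zpowers (x * y) := by
    intro h
    have h2 := (hcomm_of_zpow (x * y) x h).eq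
    exact hncomm (mul_left_cancel ((mul_assoc x y x).symm.trans h2)).symm
  have hzy : x * y ∉ zpowers y := by
    intro h
    have h2 := (hcomm_of_zpow y (x * y) h).eq
    -- h2 : y * (x * y) = (x * y) * y
    have h3 : (y * x) * y = (x * y) * y := (mul_assoc y x y).trans h2
    exact hncomm (mul_right_cancel h3).symm
  have hyz : y ∉ zpowers (x * y) := by
    intro h
    have h2 := (hcomm_of_zpow (x * y) y h).eq
    -- h2 : (x * y) * y = y * (x * y)
    have h3 : (x * y) * y = (y * x) * y := h2.trans (mul_assoc y x y).symm
    exact hncomm (mul_right_cancel h3)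
  have hzx_ne : x * y ≠ x := by
    intro h
    exact hy1 (mul_left_cancel (h.trans (mul_one x).symm))
  have hzy_ne : x * y ≠ y := by
    intro h
    exact hx1 (mul_eq_right.mp h)
  -- adjacency of c with g * c for p-elements g ∈ P
  have adjHelper : ∀ g : G, g ∈ P → g ≠ 1 → (powerGraph G).Adj c (g * c) := by
    intro g hg hg1
    obtain ⟨k, hk⟩ := orderOf_dvd_of_mem hPp hg
    have hgc : Commute g c := commute_coprime hnil hpq ⟨k, hk⟩ hcord
    have hco : Nat.Coprime (orderOf g) q :=
      Nat.Coprime.coprime_dvd_left hk (Nat.Coprime.pow_left k ((Nat.coprime_primes hp hq).mpr hpq))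
    obtain ⟨m, hm1, hm2⟩ := Nat.chineseRemainder hco 0 1
    have hm0 : 0 < m := by
      rcases Nat.eq_zero_or_pos m with h | h
      · exfalso
        subst h
        have : q ∣ 1 := Nat.modEq_zero_iff_dvd.mp hm2.symm
        exact hq.ne_one (Nat.dvd_one.mp this)
      · exact h
    refine ⟨?_, Or.inl ⟨m, hm0, ?_⟩⟩
    · intro h
      exact hg1 (mul_eq_right.mp h.symm)
    · rw [hgc.mul_pow]
      have hg_m : g ^ m = 1 := orderOf_dvd_iff_pow_eq_one.mp (Nat.modEq_zero_iff_dvd.mp hm1)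
      have hc_m : c ^ m = c := by
        conv_rhs => rw [← pow_one c]
        exact pow_eq_pow_iff_modEq.mpr (by rwa [hc])
      rw [hg_m, hc_m, one_mul]
  -- core non-adjacency computation
  have core : ∀ u v : G, u ∈ P → v ∈ P → v ∉ zpowers u → ∀ n : ℕ, (u * c) ^ n ≠ v * c := by
    intro u v hu hv hvu n hn
    have huc : Commute u c := commute_coprime hnil hpq (orderOf_dvd_of_mem hPp hu) hcord
    rw [huc.mul_pow] at hn
    have e2 : v = u ^ n * c ^ n * c⁻¹ := by rw [hn, mul_inv_cancel_right]
    have h1 : v⁻¹ * u ^ n = c ^ ((1 : ℤ) - n) := by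
      rw [e2, zpow_sub, zpow_one, zpow_natCast]
      group
    have hone := keyE _ (mul_mem (inv_mem hv) (pow_mem hu n)) _ h1
    exact hvu (by rw [inv_mul_eq_one.mp hone]; exact npow_mem_zpowers u n)
  have nadjHelper : ∀ u v : G, u ∈ P → v ∈ P → u ∉ zpowers v → v ∉ zpowers u →
      ¬ (powerGraph G).Adj (u * c) (v * c) := by
    intro u v hu hv huv hvu hadj
    obtain ⟨hne, h | h⟩ := hadj
    · obtain ⟨n, -, hn⟩ := h
      exact core v u hv hu huv n hn
    · obtain ⟨n, -, hn⟩ := h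
      exact core u v hu hv hvu n hn
  -- non-dominating vertices
  have nd_c : ¬ (powerGraph G).IsDominatingVertex c := by
    intro hdom
    have hxc : x ≠ c := by
      intro h
      exact hx1 (keyE x hxP 1 (by rw [h, zpow_one]))
    obtain ⟨-, h | h⟩ := hdom x hxc
    · obtain ⟨n, -, hn⟩ := h
      exact hc1 (keyE c (hn ▸ pow_mem hxP n) 1 (zpow_one c).symm)
    · obtain ⟨n, -, hn⟩ := h
      exact hx1 (keyE x hxP n (by rw [← hn, zpow_natCast]))
  have nd_leaf : ∀ u v : G, u ∈ P → v ∈ P → u ∉ zpowers v → v ∉ zpowers u → u ≠ v →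
      ¬ (powerGraph G).IsDominatingVertex (u * c) := by
    intro u v hu hv huv hvu hne hdom
    have hvu_ne : v * c ≠ u * c := fun h => hne (mul_right_cancel h).symm
    exact nadjHelper u v hu hv huv hvu (hdom (v * c) hvu_ne)
  have nd_xc := nd_leaf x y hxP hyP hxy' hyx hxy_ne
  have nd_yc := nd_leaf y x hyP hxP hyx hxy' hxy_ne.symm
  have nd_zc := nd_leaf (x * y) x hzP hxP hzx hxz hzx_ne
  -- assemble the claw
  refine not_claw_of_isLineGraph hL
    (v := ⟨c, nd_c⟩) (x := ⟨x * c, nd_xc⟩) (y := ⟨y * c, nd_yc⟩) (w := ⟨x * y * c, nd_zc⟩)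
    ?_ ?_ ?_ ?_ ?_ ?_ ?_ ?_ ?_
  · exact adjHelper x hxP hx1
  · exact adjHelper y hyP hy1
  · exact adjHelper (x * y) hzP hz1
  · exact fun h => hxy_ne (mul_right_cancel (congrArg Subtype.val h))
  · exact fun h => hzx_ne (mul_right_cancel (congrArg Subtype.val h)).symm
  · exact fun h => hzy_ne (mul_right_cancel (congrArg Subtype.val h)).symm
  · exact nadjHelper x y hxP hyP hxy' hyx
  · exact nadjHelper x (x * y) hxP hzP hxz hzx
  · exact nadjHelper y (x * y) hyP hzP hyz hzy

end GroupAux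

theorem properPowerGraph_not_isLineGraph_of_two_primes (G : Type) [Group G] [Finite G]
    (hnil : Group.IsNilpotent G) (hna : ∃ a b : G, a * b ≠ b * a)
    (hp : (Nat.card G).primeFactors.card = 2) :
    ¬ IsLineGraph (properPowerGraph G) := by
  obtain ⟨p, q, hpq, hset⟩ := Finset.card_eq_two.mp hp
  have hpmem : p ∈ (Nat.card G).primeFactors := by rw [hset]; simp
  have hqmem : q ∈ (Nat.card G).primeFactors := by rw [hset]; simp
  have hp' : p.Prime := Nat.prime_of_mem_primeFactors hpmem
  have hq' : q.Prime := Nat.prime_of_mem_primeFactors hqmem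
  have hpdvd : p ∣ Nat.card G := Nat.dvd_of_mem_primeFactors hpmem
  have hqdvd : q ∣ Nat.card G := Nat.dvd_of_mem_primeFactors hqmem
  haveI := Fact.mk hp'
  haveI := Fact.mk hq'
  have hfac : (Nat.card G).primeFactors ⊆ {p, q} := hset ▸ Finset.Subset.refl _
  obtain ⟨a, b, hab⟩ := hna
  obtain ⟨au, av, ha, hau, hav⟩ := split_element hp' hq' hpq hfac a
  obtain ⟨bu, bv, hb, hbu, hbv⟩ := split_element hp' hq' hpq hfac b
  by_cases h1 : Commute au bu
  · by_cases h2 : Commute av bv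
    · exfalso
      apply hab
      have c_avbu : Commute av bu := (commute_coprime hnil hpq hbu hav).symm
      have c_aubv : Commute au bv := commute_coprime hnil hpq hau hbv
      have : Commute (au * av) (bu * bv) :=
        Commute.mul_left (h1.mul_right c_aubv) (c_avbu.mul_right h2)
      rw [ha, hb]
      exact this.eq
    · exact claw_case hnil hpq.symm hpdvd hav hbv h2
  · exact claw_case hnil hpq hqdvd hau hbu h1
end

section
/- Let n ≥ 3 and let Q_{2^n} be the generalized quaternion group of order 2^n. Then the proper power graph P**(Q_{2^n}) is a line graph: there exists a graph Γ such that P**(Q_{2^n}) is isomorphic to the line graph of Γ. -/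
open SimpleGraph

/-- auxiliary: a disjoint union of cliques is a line graph (of a star forest). -/
private def starForest {C V : Type} (f : V → C) : SimpleGraph (C ⊕ V) where
  Adj x y := (∃ v, x = Sum.inl (f v) ∧ y = Sum.inr v) ∨ (∃ v, y = Sum.inl (f v) ∧ x = Sum.inr v)
  symm := by constructor; rintro x y (h | h); exact Or.inr h; exact Or.inl h
  loopless := by constructor; rintro x (⟨v, h1, h2⟩ | ⟨v, h1, h2⟩) <;> rw [h1] at h2 <;> exact Sum.inl_ne_inr h2

private lemma isLineGraph_of_cliques {V C : Type} (H : SimpleGraph V) (f : V → C)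
    (h : ∀ x y, H.Adj x y ↔ x ≠ y ∧ f x = f y) : IsLineGraph H := by
  refine ⟨C ⊕ V, starForest f, ⟨?_⟩⟩
  have hmem : ∀ v : V, s(Sum.inl (f v), Sum.inr v) ∈ (starForest f).edgeSet := by
    intro v
    rw [SimpleGraph.mem_edgeSet]
    exact Or.inl ⟨v, rfl, rfl⟩
  let e : V → (starForest f).edgeSet := fun v => ⟨s(Sum.inl (f v), Sum.inr v), hmem v⟩
  have hbij : Function.Bijective e := by
    constructor
    · intro u v huv
      have := Subtype.ext_iff.mp huv
      rw [Sym2.eq_iff] at this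
      rcases this with ⟨-, h2⟩ | ⟨h1, -⟩
      · exact Sum.inr_injective h2
      · exact absurd h1 (Sum.inl_ne_inr)
    · rintro ⟨s, hs⟩
      induction s with
      | h x y =>
        rw [SimpleGraph.mem_edgeSet] at hs
        rcases hs with ⟨v, h1, h2⟩ | ⟨v, h1, h2⟩
        · subst h1; subst h2; exact ⟨v, rfl⟩
        · subst h1; subst h2; exact ⟨v, Subtype.ext Sym2.eq_swap⟩
  refine ⟨Equiv.ofBijective e hbij, ?_⟩
  intro u v
  simp only [Equiv.ofBijective_apply]
  rw [lineGraph_adj_iff_exists, h u v]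
  have huv : u ≠ v → e u ≠ e v := fun hne hh => hne (hbij.1 hh)
  constructor
  · rintro ⟨hne, w, hw1, hw2⟩
    have huv' : u ≠ v := fun hh => hne (by rw [hh])
    refine ⟨huv', ?_⟩
    simp only [e, Sym2.mem_iff] at hw1 hw2
    rcases hw1 with h1 | h1 <;> rcases hw2 with h2 | h2 <;> rw [h1] at h2
    · exact Sum.inl_injective h2
    · exact absurd h2 Sum.inl_ne_inr
    · exact absurd h2.symm Sum.inl_ne_inr
    · exact absurd (Sum.inr_injective h2) huv'
  · rintro ⟨hne, hf⟩
    refine ⟨huv hne, Sum.inl (f u), ?_, ?_⟩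
    · simp [e]
    · simp [e, hf]

private lemma zmod_solv {N : ℕ} [NeZero N] (u w : ℕ) (h : N.gcd u ∣ w) :
    ∃ k : ℕ, (k : ZMod N) * (u : ZMod N) = (w : ZMod N) := by
  obtain ⟨c, hc⟩ := h
  have hb := Nat.gcd_eq_gcd_ab N u
  set z : ZMod N := ((Nat.gcdB N u : ℤ) : ZMod N) * (c : ZMod N) with hz
  refine ⟨z.val, ?_⟩
  rw [ZMod.natCast_zmod_val]
  have h1 : ((N.gcd u : ℕ) : ZMod N) = (u : ZMod N) * ((Nat.gcdB N u : ℤ) : ZMod N) := by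
    have h2 := congrArg (fun t : ℤ => (t : ZMod N)) hb
    push_cast at h2
    simpa [ZMod.natCast_self] using h2
  calc z * (u : ZMod N) = ((N.gcd u : ℕ) : ZMod N) * (c : ZMod N) := by rw [h1, hz]; ring
  _ = (w : ZMod N) := by rw [← Nat.cast_mul, ← hc]

private lemma gcd_two_pow_comparable {N : ℕ} (hN : ∃ e, N = 2 ^ e) (u v : ℕ) :
    N.gcd u ∣ N.gcd v ∨ N.gcd v ∣ N.gcd u := by
  obtain ⟨e, rfl⟩ := hN
  obtain ⟨s, hs, hsd⟩ := (Nat.dvd_prime_pow Nat.prime_two).mp (Nat.gcd_dvd_left (2 ^ e) u)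
  obtain ⟨t, ht, htd⟩ := (Nat.dvd_prime_pow Nat.prime_two).mp (Nat.gcd_dvd_left (2 ^ e) v)
  rcases le_total s t with hst | hst
  · exact Or.inl (by rw [hsd, htd]; exact pow_dvd_pow 2 hst)
  · exact Or.inr (by rw [hsd, htd]; exact pow_dvd_pow 2 hst)

private lemma zmod_chain {N : ℕ} [NeZero N] (hN : ∃ e, N = 2 ^ e) (i j : ZMod N) :
    (∃ k : ℕ, (k : ZMod N) * i = j) ∨ (∃ k : ℕ, (k : ZMod N) * j = i) := by
  rcases gcd_two_pow_comparable hN i.val j.val with h | h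
  · left
    obtain ⟨k, hk⟩ := zmod_solv i.val j.val (h.trans (Nat.gcd_dvd_right _ _))
    exact ⟨k, by rwa [ZMod.natCast_zmod_val, ZMod.natCast_zmod_val] at hk⟩
  · right
    obtain ⟨k, hk⟩ := zmod_solv j.val i.val (h.trans (Nat.gcd_dvd_right _ _))
    exact ⟨k, by rwa [ZMod.natCast_zmod_val, ZMod.natCast_zmod_val] at hk⟩

private lemma zmod_hit_half {m : ℕ} [NeZero m] (hm : ∃ e, m = 2 ^ e) (j : ZMod (2 * m))
    (hj : j ≠ 0) : ∃ k : ℕ, (k : ZMod (2 * m)) * j = (m : ZMod (2 * m)) := by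
  obtain ⟨e, rfl⟩ := hm
  haveI : NeZero (2 * 2 ^ e) := ⟨by positivity⟩
  have hgd : (2 * 2 ^ e).gcd j.val ∣ 2 ^ e := by
    obtain ⟨s, hs, hsd⟩ := (Nat.dvd_prime_pow Nat.prime_two).mp
      (Nat.gcd_dvd_left (2 * 2 ^ e) j.val |>.trans (by rw [← pow_succ']))
    have hse : s ≤ e := by
      by_contra hse
      have h1 : s = e + 1 := by omega
      have h2 : 2 ^ (e + 1) ∣ j.val := by rw [← h1, ← hsd]; exact Nat.gcd_dvd_right _ _
      have h3 : j.val < 2 * 2 ^ e := ZMod.val_lt j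
      have h4 : j.val = 0 := Nat.eq_zero_of_dvd_of_lt h2 (by rw [pow_succ']; exact h3)
      exact hj (ZMod.val_eq_zero j |>.mp h4)
    rw [hsd]; exact pow_dvd_pow 2 hse
  obtain ⟨k, hk⟩ := zmod_solv j.val (2 ^ e) hgd
  exact ⟨k, by rwa [ZMod.natCast_zmod_val] at hk⟩

namespace QuaternionGroup

variable {m : ℕ}

private lemma a_pow (i : ZMod (2 * m)) (k : ℕ) : (a i) ^ k = a ((k : ZMod (2 * m)) * i) := by
  induction k with
  | zero => simp
  | succ k ih =>
    rw [pow_succ, ih, a_mul_a]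
    congr 1
    push_cast
    ring

private lemma m_add_m (hm : 0 < m) : (m : ZMod (2 * m)) + (m : ZMod (2 * m)) = 0 := by
  have h := ZMod.natCast_self (2 * m)
  push_cast at h
  linear_combination h

private lemma xa_pow_mem (i : ZMod (2 * m)) (k : ℕ) :
    (xa i) ^ k = a 0 ∨ (xa i) ^ k = a m ∨ (xa i) ^ k = xa i ∨ (xa i) ^ k = xa (i + (m : ZMod (2 * m))) := by
  have hsub : i - (m : ZMod (2 * m)) = i + m := by
    rw [sub_eq_add_neg]
    congr 1
    rw [neg_eq_iff_add_eq_zero]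
    have h := ZMod.natCast_self (2 * m)
    push_cast at h
    linear_combination h
  induction k with
  | zero => exact Or.inl (by simp)
  | succ k ih =>
    rcases ih with h | h | h | h <;> rw [pow_succ, h]
    · exact Or.inr (Or.inr (Or.inl (by simp)))
    · refine Or.inr (Or.inr (Or.inr ?_))
      rw [a_mul_xa, hsub]
    · exact Or.inr (Or.inl (by rw [xa_mul_xa]; congr 1; ring))
    · exact Or.inl (by rw [xa_mul_xa]; congr 1; ring)

variable [NeZero m]

private lemma cast_injlt {x y : ℕ} (hx : x < 2 * m) (hy : y < 2 * m) (hxy : x ≠ y) :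
    (x : ZMod (2 * m)) ≠ (y : ZMod (2 * m)) := fun h =>
  hxy (by rw [← ZMod.val_cast_of_lt hx, ← ZMod.val_cast_of_lt hy, h])

private lemma dom_one : (powerGraph (QuaternionGroup m)).IsDominatingVertex (a 0) := by
  intro u hu
  refine ⟨fun h => hu h.symm, Or.inl ⟨Fintype.card (QuaternionGroup m), Fintype.card_pos, ?_⟩⟩
  rw [← one_def]
  exact pow_card_eq_one

private lemma dom_invol (hm : ∃ e, m = 2 ^ e) :
    (powerGraph (QuaternionGroup m)).IsDominatingVertex (a (m : ZMod (2 * m))) := by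
  have hmpos : 0 < m := Nat.pos_of_ne_zero (NeZero.ne m)
  have h0 := ZMod.natCast_self (2 * m)
  push_cast at h0
  intro u hu
  refine ⟨fun h => hu h.symm, ?_⟩
  match u with
  | xa j => exact Or.inl ⟨2, two_pos, xa_sq j⟩
  | a j =>
    by_cases hj : j = 0
    · subst hj
      refine Or.inr ⟨2, two_pos, ?_⟩
      rw [a_pow]
      congr 1
    · obtain ⟨k, hk⟩ := zmod_hit_half hm j hj
      refine Or.inl ⟨k + 2 * m, by omega, ?_⟩
      rw [a_pow]
      congr 1
      push_cast
      linear_combination hk + j * h0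

private lemma not_dom_a (i : ZMod (2 * m)) (hi0 : i ≠ 0) (him : i ≠ (m : ZMod (2 * m))) :
    ¬ (powerGraph (QuaternionGroup m)).IsDominatingVertex (a i) := by
  intro hd
  have hadj := hd (xa 0) (fun h => by cases h)
  rcases hadj.2 with ⟨k, hk, h⟩ | ⟨k, hk, h⟩
  · rcases xa_pow_mem (m := m) 0 k with hp | hp | hp | hp <;> rw [hp] at h
    · exact hi0 (a.inj h).symm
    · exact him (a.inj h).symm
    · cases h
    · cases h
  · rw [a_pow] at h
    cases h

private lemma not_dom_xa (hm2 : 2 ≤ m) (i : ZMod (2 * m)) :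
    ¬ (powerGraph (QuaternionGroup m)).IsDominatingVertex (xa i) := by
  haveI : Fact (1 < 2 * m) := ⟨by omega⟩
  have h10 : (1 : ZMod (2 * m)) ≠ 0 := by
    intro h
    have h2 := congrArg ZMod.val h
    rw [ZMod.val_one, ZMod.val_zero] at h2
    exact one_ne_zero h2
  have h1m : (1 : ZMod (2 * m)) ≠ (m : ZMod (2 * m)) := by
    intro h
    have h2 := congrArg ZMod.val h
    rw [ZMod.val_one, ZMod.val_cast_of_lt (by omega)] at h2
    omega
  intro hd
  have hadj := hd (a 1) (fun h => by cases h)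
  rcases hadj.2 with ⟨k, hk, h⟩ | ⟨k, hk, h⟩
  · rw [a_pow] at h
    cases h
  · rcases xa_pow_mem i k with hp | hp | hp | hp <;> rw [hp] at h
    · exact h10 (a.inj h).symm
    · exact h1m ((a.inj h).symm)
    · cases h
    · cases h

private lemma casthom_eq_zero_iff (hm2 : 2 ≤ m) (x : ZMod (2 * m)) :
    ZMod.castHom (dvd_mul_left m 2) (ZMod m) x = 0 ↔ (x = 0 ∨ x = (m : ZMod (2 * m))) := by
  rw [ZMod.castHom_apply, ← ZMod.natCast_val, ZMod.natCast_eq_zero_iff]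
  constructor
  · rintro ⟨c, hc⟩
    have hlt : x.val < 2 * m := ZMod.val_lt x
    have hc2 : c < 2 := by
      by_contra hcc
      push_neg at hcc
      have : 2 * m ≤ m * c := by
        calc 2 * m = m * 2 := by ring
        _ ≤ m * c := Nat.mul_le_mul_left m hcc
      omega
    interval_cases c
    · left
      exact (ZMod.val_eq_zero x).mp (by omega)
    · right
      rw [← ZMod.natCast_zmod_val x, hc, mul_one]
  · rintro (rfl | rfl)
    · simp
    · rw [ZMod.val_cast_of_lt (by omega)]

private lemma casthom_eq_iff (hm2 : 2 ≤ m) (i j : ZMod (2 * m)) :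
    ZMod.castHom (dvd_mul_left m 2) (ZMod m) i = ZMod.castHom (dvd_mul_left m 2) (ZMod m) j ↔
      (i = j ∨ i = j + (m : ZMod (2 * m))) := by
  constructor
  · intro h
    have h0 : ZMod.castHom (dvd_mul_left m 2) (ZMod m) (i - j) = 0 := by
      rw [map_sub, h, sub_self]
    rcases (casthom_eq_zero_iff hm2 (i - j)).mp h0 with h1 | h1
    · exact Or.inl (sub_eq_zero.mp h1)
    · exact Or.inr (by rw [← h1]; ring)
  · rintro (rfl | rfl)
    · rfl
    · rw [map_add, map_natCast, ZMod.natCast_self, add_zero]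

/-- The coloring function sending each vertex to its clique. -/
private def F : QuaternionGroup m → (ZMod m ⊕ Unit)
  | a _ => Sum.inr ()
  | xa i => Sum.inl (ZMod.castHom (dvd_mul_left m 2) (ZMod m) i)

private lemma adj_iff (hm : ∃ e, m = 2 ^ e) (hm2 : 2 ≤ m) (x y : QuaternionGroup m)
    (hx : ¬ (powerGraph (QuaternionGroup m)).IsDominatingVertex x)
    (hy : ¬ (powerGraph (QuaternionGroup m)).IsDominatingVertex y) :
    (powerGraph (QuaternionGroup m)).Adj x y ↔ x ≠ y ∧ F x = F y := by
  have h2m : ∃ e, 2 * m = 2 ^ e := by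
    obtain ⟨e, rfl⟩ := hm
    exact ⟨e + 1, (pow_succ' 2 e).symm⟩
  have h0 := ZMod.natCast_self (2 * m)
  push_cast at h0
  have hnd : ∀ i : ZMod (2 * m), ¬ (powerGraph (QuaternionGroup m)).IsDominatingVertex (a i) →
      i ≠ 0 ∧ i ≠ (m : ZMod (2 * m)) := by
    intro i hi
    constructor
    · rintro rfl
      exact hi dom_one
    · rintro rfl
      exact hi (dom_invol hm)
  match x, y with
  | a i, a j =>
    obtain ⟨hi0, him⟩ := hnd i hx
    obtain ⟨hj0, hjm⟩ := hnd j hy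
    simp only [F, and_true]
    constructor
    · exact fun h => h.1
    · intro hne
      refine ⟨hne, ?_⟩
      rcases zmod_chain h2m i j with ⟨k, hk⟩ | ⟨k, hk⟩
      · refine Or.inr ⟨k + 2 * m, by omega, ?_⟩
        rw [a_pow]
        congr 1
        push_cast
        linear_combination hk + i * h0
      · refine Or.inl ⟨k + 2 * m, by omega, ?_⟩
        rw [a_pow]
        congr 1
        push_cast
        linear_combination hk + j * h0
  | a i, xa j =>
    obtain ⟨hi0, him⟩ := hnd i hx
    constructor
    · rintro ⟨-, ⟨k, hk, h⟩ | ⟨k, hk, h⟩⟩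
      · rcases xa_pow_mem (m := m) j k with hp | hp | hp | hp <;> rw [hp] at h
        · exact absurd (a.inj h).symm hi0
        · exact absurd (a.inj h).symm him
        · cases h
        · cases h
      · rw [a_pow] at h
        cases h
    · rintro ⟨-, hf⟩
      exact absurd hf (by simp [F])
  | xa i, a j =>
    obtain ⟨hj0, hjm⟩ := hnd j hy
    constructor
    · rintro ⟨-, ⟨k, hk, h⟩ | ⟨k, hk, h⟩⟩
      · rw [a_pow] at h
        cases h
      · rcases xa_pow_mem (m := m) i k with hp | hp | hp | hp <;> rw [hp] at h
        · exact absurd (a.inj h).symm hj0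
        · exact absurd (a.inj h).symm hjm
        · cases h
        · cases h
    · rintro ⟨-, hf⟩
      exact absurd hf (by simp [F])
  | xa i, xa j =>
    simp only [F, Sum.inl.injEq, casthom_eq_iff hm2]
    constructor
    · rintro ⟨hne, ⟨k, hk, h⟩ | ⟨k, hk, h⟩⟩
      · rcases xa_pow_mem (m := m) j k with hp | hp | hp | hp <;> rw [hp] at h
        · cases h
        · cases h
        · exact ⟨hne, Or.inl (xa.inj h).symm⟩
        · exact ⟨hne, Or.inr (by rw [← (xa.inj h)])⟩
      · rcases xa_pow_mem (m := m) i k with hp | hp | hp | hp <;> rw [hp] at h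
        · cases h
        · cases h
        · exact ⟨hne, Or.inl (xa.inj h)⟩
        · refine ⟨hne, Or.inr ?_⟩
          have hji : j = i + (m : ZMod (2 * m)) := (xa.inj h).symm
          rw [hji]
          linear_combination -h0
    · rintro ⟨hne, hij | hij⟩
      · exact absurd (congrArg xa hij) hne
      · refine ⟨hne, Or.inr ⟨3, by omega, ?_⟩⟩
        have h3 : (xa i) ^ 3 = a (m : ZMod (2 * m)) * xa i := by
          rw [pow_succ, xa_sq]
        rw [h3, a_mul_xa, hij]
        congr 1
        ring
end QuaternionGroup

theorem properPowerGraph_quaternion_isLineGraph (n : ℕ) (hn : 3 ≤ n) :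
    IsLineGraph (properPowerGraph (QuaternionGroup (2 ^ (n - 2)))) := by
  set m : ℕ := 2 ^ (n - 2) with hmdef
  haveI : NeZero m := ⟨by positivity⟩
  have hm : ∃ e, m = 2 ^ e := ⟨n - 2, rfl⟩
  have hm2 : 2 ≤ m := by
    calc 2 = 2 ^ 1 := rfl
    _ ≤ 2 ^ (n - 2) := Nat.pow_le_pow_right (by norm_num) (by omega)
  apply isLineGraph_of_cliques _ (fun v => QuaternionGroup.F v.val)
  intro x y
  have h := QuaternionGroup.adj_iff hm hm2 x.val y.val x.2 y.2
  exact h.trans (and_congr_left' Subtype.coe_ne_coe)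
end

section
/- Let p be a prime and let G be a finite non-abelian group whose exponent equals p (i.e., every element of G satisfies g^p = e). Then the proper power graph P**(G) is a line graph: there exists a graph Γ such that P**(G) is isomorphic to the line graph of Γ. -/
section Aux

variable {p : ℕ} {G : Type} [Group G] [Finite G]

lemma aux_orderOf (hp : p.Prime) (hexp : Monoid.exponent G = p) {x : G} (hx : x ≠ 1) :
    orderOf x = p := by
  have h := Monoid.order_dvd_exponent x
  rw [hexp] at h
  rcases hp.eq_one_or_self_of_dvd _ h with h1 | h1
  · exact absurd (orderOf_eq_one_iff.mp h1) hx
  · exact h1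

lemma aux_zpowers_eq (hp : p.Prime) (hexp : Monoid.exponent G = p) {x y : G}
    (hx : x ≠ 1) (hxy : x ∈ Subgroup.zpowers y) :
    Subgroup.zpowers x = Subgroup.zpowers y := by
  have hy : y ≠ 1 := by
    rintro rfl
    rw [Subgroup.zpowers_one_eq_bot, Subgroup.mem_bot] at hxy
    exact hx hxy
  have hle : Subgroup.zpowers x ≤ Subgroup.zpowers y := Subgroup.zpowers_le.mpr hxy
  refine Subgroup.eq_of_le_of_card_ge hle ?_
  rw [Nat.card_zpowers, Nat.card_zpowers, aux_orderOf hp hexp hx, aux_orderOf hp hexp hy]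

lemma aux_adj_iff (hp : p.Prime) (hexp : Monoid.exponent G = p) {x y : G}
    (hx : x ≠ 1) (hy : y ≠ 1) :
    (powerGraph G).Adj x y ↔ x ≠ y ∧ Subgroup.zpowers x = Subgroup.zpowers y := by
  constructor
  · rintro ⟨hne, (⟨n, -, rfl⟩ | ⟨n, -, rfl⟩)⟩
    · exact ⟨hne, aux_zpowers_eq hp hexp hx (Subgroup.pow_mem _ (Subgroup.mem_zpowers y) n)⟩
    · exact ⟨hne, (aux_zpowers_eq hp hexp hy
        (Subgroup.pow_mem _ (Subgroup.mem_zpowers x) n)).symm⟩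
  · rintro ⟨hne, heq⟩
    have hmem : x ∈ Subgroup.zpowers y := heq ▸ Subgroup.mem_zpowers x
    obtain ⟨n, hn⟩ : x ∈ Submonoid.powers y := mem_powers_iff_mem_zpowers.mpr hmem
    have hn0 : 0 < n := by
      rcases Nat.eq_zero_or_pos n with h | h
      · subst h; simp at hn; exact absurd hn.symm hx
      · exact h
    exact ⟨hne, Or.inl ⟨n, hn0, hn⟩⟩

lemma aux_dominating_iff (hp : p.Prime) (hexp : Monoid.exponent G = p)
    (hna : ∃ a b : G, a * b ≠ b * a) {v : G} :
    (powerGraph G).IsDominatingVertex v ↔ v = 1 := by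
  constructor
  · intro hdom
    by_contra hv
    -- find u outside zpowers v
    have hall : ¬ ∀ u : G, u ∈ Subgroup.zpowers v := by
      intro hall
      obtain ⟨a, b, hab⟩ := hna
      obtain ⟨m, hm⟩ := Subgroup.mem_zpowers_iff.mp (hall a)
      obtain ⟨k, hk⟩ := Subgroup.mem_zpowers_iff.mp (hall b)
      apply hab
      rw [← hm, ← hk, ← zpow_add, ← zpow_add, add_comm]
    push_neg at hall
    obtain ⟨u, hu⟩ := hall
    have huv : u ≠ v := fun h => hu (h ▸ Subgroup.mem_zpowers v)
    obtain ⟨-, (⟨n, -, hn⟩ | ⟨n, -, hn⟩)⟩ := hdom u huv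
    · -- u ^ n = v, so v ∈ zpowers u
      have hvmem : v ∈ Subgroup.zpowers u :=
        hn ▸ Subgroup.pow_mem _ (Subgroup.mem_zpowers u) n
      have := aux_zpowers_eq hp hexp hv hvmem
      exact hu (this ▸ Subgroup.mem_zpowers u)
    · exact hu (hn ▸ Subgroup.pow_mem _ (Subgroup.mem_zpowers v) n)
  · rintro rfl u hu
    refine ⟨fun h => hu h.symm, Or.inl ⟨p, hp.pos, ?_⟩⟩
    rw [← hexp]
    exact Monoid.pow_exponent_eq_one u

end Aux

/-- The union-of-stars graph: one center per subgroup, leaves are the non-dominating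
group elements, each joined to the center indexed by the cyclic subgroup it generates. -/
def starsGraph (G : Type) [Group G] :
    SimpleGraph ({x : G | ¬ (powerGraph G).IsDominatingVertex x} ⊕ Subgroup G) where
  Adj a b :=
    (∃ s H, a = Sum.inl s ∧ b = Sum.inr H ∧ Subgroup.zpowers s.val = H) ∨
    (∃ s H, a = Sum.inr H ∧ b = Sum.inl s ∧ Subgroup.zpowers s.val = H)
  symm := by
    constructor
    rintro a b (⟨s, H, rfl, rfl, h⟩ | ⟨s, H, rfl, rfl, h⟩)
    · exact Or.inr ⟨s, H, rfl, rfl, h⟩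
    · exact Or.inl ⟨s, H, rfl, rfl, h⟩
  loopless := by
    constructor
    rintro a (⟨s, H, rfl, h, -⟩ | ⟨s, H, rfl, h, -⟩) <;> simp at h

theorem properPowerGraph_isLineGraph_of_exponent_prime (p : ℕ) (hp : p.Prime)
    (G : Type) [Group G] [Finite G] (hna : ∃ a b : G, a * b ≠ b * a)
    (hexp : Monoid.exponent G = p) :
    IsLineGraph (properPowerGraph G) := by
  classical
  set S : Set G := {x : G | ¬ (powerGraph G).IsDominatingVertex x} with hS
  have hne1 : ∀ s : S, (s : G) ≠ 1 := by
    rintro ⟨s, hs⟩ rfl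
    exact hs ((aux_dominating_iff hp hexp hna).mpr rfl)
  refine ⟨S ⊕ Subgroup G, starsGraph G, ⟨?_⟩⟩
  -- the map from S to edges of the stars graph
  have hmem : ∀ s : S, s(Sum.inl s, Sum.inr (Subgroup.zpowers (s : G)))
      ∈ (starsGraph G).edgeSet := by
    intro s
    exact Or.inl ⟨s, _, rfl, rfl, rfl⟩
  let φ : S → (starsGraph G).edgeSet := fun s => ⟨_, hmem s⟩
  have hinj : Function.Injective φ := by
    intro a b hab
    have : s(Sum.inl a, Sum.inr (Subgroup.zpowers (a : G)))
        = (s(Sum.inl b, Sum.inr (Subgroup.zpowers (b : G)))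
          : Sym2 (S ⊕ Subgroup G)) := congrArg Subtype.val hab
    rw [Sym2.eq_iff] at this
    rcases this with ⟨h1, -⟩ | ⟨h1, h2⟩
    · exact Sum.inl_injective h1
    · simp at h1
  have hsurj : Function.Surjective φ := by
    rintro ⟨e, he⟩
    induction e with
    | _ a b =>
      rw [SimpleGraph.mem_edgeSet] at he
      rcases he with ⟨s, H, rfl, rfl, rfl⟩ | ⟨s, H, rfl, rfl, rfl⟩
      · exact ⟨s, rfl⟩
      · exact ⟨s, Subtype.ext (Sym2.eq_swap)⟩
  refine ⟨Equiv.ofBijective φ (show Function.Bijective φ from ⟨hinj, hsurj⟩), ?_⟩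
  intro a b
  simp only [Equiv.ofBijective_apply]
  rw [SimpleGraph.lineGraph_adj_iff_exists]
  have hadj : (properPowerGraph G).Adj a b ↔
      (a : G) ≠ (b : G) ∧ Subgroup.zpowers (a : G) = Subgroup.zpowers (b : G) := by
    exact aux_adj_iff hp hexp (hne1 a) (hne1 b)
  rw [hadj]
  constructor
  · rintro ⟨hne, v, hva, hvb⟩
    have hab : a ≠ b := fun h => hne (by rw [h])
    refine ⟨fun h => hab (Subtype.ext h), ?_⟩
    simp only [φ, Sym2.mem_iff] at hva hvb
    rcases hva with rfl | rfl <;> rcases hvb with h | h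
    · exact absurd (Sum.inl_injective h) hab
    · simp at h
    · simp at h
    · rw [Sum.inr_injective h]
  · rintro ⟨hne, heq⟩
    have hab : a ≠ b := fun h => hne (congrArg Subtype.val h)
    refine ⟨fun h => hab (hinj h), Sum.inr (Subgroup.zpowers (a : G)), ?_, ?_⟩
    · simp [φ]
    · simp [φ, heq]
end

section
/- Let p be a prime and let G be a finite p-group. Then the number of distinct subgroups of G of order p is never equal to 2; that is, G has either exactly one subgroup of order p or at least three subgroups of order p. -/
private lemma aux_third_subgroup (p : ℕ) (hp : p.Prime) {G : Type} [Group G] [Finite G]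
    (z : G) (hzc : z ∈ Subgroup.center G) (hz : orderOf z = p)
    (D : Subgroup G) (hD : Nat.card D = p) (hCD : Subgroup.zpowers z ≠ D)
    (key : ∀ M : Subgroup G, Nat.card M = p → M = Subgroup.zpowers z ∨ M = D) : False := by
  haveI : Fact p.Prime := ⟨hp⟩
  have hzC : Nat.card (Subgroup.zpowers z) = p := by rw [Nat.card_zpowers, hz]
  obtain ⟨k, hk⟩ := exists_prime_orderOf_dvd_card' (G := D) p (by rw [hD])
  have hkg : orderOf (k : G) = p := by
    rw [← hk]; exact orderOf_injective D.subtype D.subtype_injective k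
  have hkD : Subgroup.zpowers (k : G) = D := by
    apply Subgroup.eq_of_le_of_card_ge (Subgroup.zpowers_le.mpr k.2)
    rw [hD, Nat.card_zpowers, hkg]
  -- if the generator of D lies in ⟨z⟩ we get a contradiction
  have hfalse : (k : G) ∈ Subgroup.zpowers z → False := by
    intro hmem
    have hle : D ≤ Subgroup.zpowers z := by
      rw [← hkD]; exact Subgroup.zpowers_le.mpr hmem
    exact hCD (Subgroup.eq_of_le_of_card_ge hle (by rw [hzC, hD])).symm
  have hcomm : Commute z (k : G) :=
    Commute.symm (Subgroup.mem_center_iff.mp hzc (k : G) : Commute (k : G) z)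
  set x := z * (k : G) with hxdef
  have hzp : z ^ p = 1 := by rw [← hz]; exact pow_orderOf_eq_one z
  have hkp : (k : G) ^ p = 1 := by rw [← hkg]; exact pow_orderOf_eq_one (k : G)
  have hxp : x ^ p = 1 := by rw [hxdef, hcomm.mul_pow, hzp, hkp, one_mul]
  have hx1 : x ≠ 1 := by
    intro h
    apply hfalse
    have hk' : (k : G) = z⁻¹ := eq_inv_of_mul_eq_one_right (hxdef ▸ h)
    rw [hk']
    exact inv_mem (Subgroup.mem_zpowers z)
  have hxord : orderOf x = p := by
    rcases hp.eq_one_or_self_of_dvd _ (orderOf_dvd_of_pow_eq_one hxp) with h | h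
    · exact absurd (orderOf_eq_one_iff.mp h) hx1
    · exact h
  have hL : Nat.card (Subgroup.zpowers x) = p := by rw [Nat.card_zpowers, hxord]
  rcases key _ hL with h | h
  · -- ⟨x⟩ = ⟨z⟩ : then k = z⁻¹ * x ∈ ⟨z⟩
    apply hfalse
    have hxmem : x ∈ Subgroup.zpowers z := h ▸ Subgroup.mem_zpowers x
    have : (k : G) = z⁻¹ * x := by rw [hxdef]; group
    rw [this]
    exact mul_mem (inv_mem (Subgroup.mem_zpowers z)) hxmem
  · -- ⟨x⟩ = D : then z = x * k⁻¹ ∈ D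
    have hxmem : x ∈ D := h ▸ Subgroup.mem_zpowers x
    have hzD : z ∈ D := by
      have : z = x * (k : G)⁻¹ := by rw [hxdef]; group
      rw [this]; exact mul_mem hxmem (inv_mem k.2)
    exact hCD (Subgroup.eq_of_le_of_card_ge (Subgroup.zpowers_le.mpr hzD) (by rw [hzC, hD]))

theorem card_subgroups_of_order_p_ne_two (p : ℕ) (hp : p.Prime) (G : Type) [Group G]
    [Finite G] (hpg : IsPGroup p G) :
    Nat.card {H : Subgroup G // Nat.card H = p} ≠ 2 := by
  intro hcard
  haveI : Fact p.Prime := ⟨hp⟩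
  obtain ⟨a, b, hab, hset⟩ := Nat.card_eq_two_iff.mp hcard
  have key : ∀ M : Subgroup G, Nat.card M = p → M = a.1 ∨ M = b.1 := by
    intro M hM
    have hmem : (⟨M, hM⟩ : {H : Subgroup G // Nat.card H = p}) ∈ ({a, b} : Set _) := by
      rw [hset]; trivial
    rcases hmem with h | h
    · exact Or.inl (congrArg Subtype.val h)
    · exact Or.inr (congrArg Subtype.val h)
  have hne : (a.1 : Subgroup G) ≠ b.1 := fun h => hab (Subtype.ext h)
  -- G is nontrivial
  haveI : Nontrivial (a.1 : Subgroup G) :=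
    Finite.one_lt_card_iff_nontrivial.mp (by rw [a.2]; exact hp.one_lt)
  obtain ⟨y, hy⟩ := exists_ne (1 : (a.1 : Subgroup G))
  haveI : Nontrivial G := nontrivial_of_ne (y : G) 1 (fun h => hy (Subtype.ext h))
  -- central element of order p
  haveI := hpg.center_nontrivial
  have hdvd : p ∣ Nat.card (Subgroup.center G) := by
    obtain ⟨n, hn0, hn⟩ := (hpg.to_subgroup (Subgroup.center G)).nontrivial_iff_card.mp
      inferInstance
    exact hn.symm ▸ dvd_pow_self _ (ne_of_gt hn0)
  obtain ⟨z, hz⟩ := exists_prime_orderOf_dvd_card' (G := Subgroup.center G) p hdvd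
  have hzord : orderOf (z : G) = p := by
    rw [← hz]
    exact orderOf_injective (Subgroup.center G).subtype (Subgroup.center G).subtype_injective z
  have hC : Nat.card (Subgroup.zpowers (z : G)) = p := by rw [Nat.card_zpowers, hzord]
  rcases key _ hC with h | h
  · rw [← h] at key hne
    exact aux_third_subgroup p hp (z : G) z.2 hzord b.1 b.2 hne key
  · rw [← h] at key hne
    exact aux_third_subgroup p hp (z : G) z.2 hzord a.1 a.2 (fun hh => hne hh.symm)
      (fun M hM => (key M hM).symm)
end
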